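/- arXiv:1406.1508 — 11 statements merged into one kernel-verified Lean document; each statement's English description precedes it below -/
import Mathlib

section
/- Let F be a field of characteristic 0 and let h ∈ F[x] be nonzero with factorization h = λ·u₁^{α₁}⋯u_t^{α_t} into distinct monic irreducible polynomials u_i and λ ∈ F*. Then for r ∈ F[x], h divides h'·r if and only if the radical u₁⋯u_t divides r. -/
open Polynomial

/-- In characteristic 0, if `h = λ · u₁^{α₁} ⋯ u_t^{α_t}` with distinct monic
irreducible `u_i` and `λ ≠ 0`, then `h ∣ h'·r` iff the radical `u₁⋯u_t` divides `r`. -/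
theorem stmt2 {F : Type*} [Field F] [CharZero F] (t : ℕ) (u : Fin t → F[X])
    (humonic : ∀ i, (u i).Monic) (huirr : ∀ i, Irreducible (u i))
    (hudist : ∀ i j, i ≠ j → u i ≠ u j)
    (α : Fin t → ℕ) (hα : ∀ i, 1 ≤ α i) (lam : F) (hlam : lam ≠ 0)
    (h : F[X]) (hfact : h = C lam * ∏ i, u i ^ α i) :
    ∀ r : F[X], h ∣ derivative h * r ↔ (∏ i, u i) ∣ r := by
  subst hfact
  intro r
  set P : F[X] := ∏ i, u i ^ α i with hPdef
  have hprime : ∀ i, Prime (u i) := fun i => (huirr i).prime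
  have hu0 : ∀ i, u i ≠ 0 := fun i => (huirr i).ne_zero
  have hndvd : ∀ i j, i ≠ j → ¬ u i ∣ u j := by
    intro i j hij hdvd
    exact hudist i j hij (eq_of_monic_of_associated (humonic i) (humonic j)
      ((huirr i).associated_of_dvd (huirr j) hdvd))
  have hcop : ∀ i j, i ≠ j → IsCoprime (u i) (u j) := fun i j hij =>
    ((huirr i).isCoprime_or_dvd (u j)).resolve_right (hndvd i j hij)
  have hdeg : ∀ i, (u i).natDegree ≠ 0 := by
    intro i h0
    exact (huirr i).ne_one ((humonic i).natDegree_eq_zero.mp h0)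
  have hder : ∀ i, ¬ u i ∣ derivative (u i) := by
    intro i hdvd
    have hd0 : derivative (u i) ≠ 0 := by
      intro h0
      exact hdeg i (natDegree_eq_zero_of_derivative_eq_zero h0)
    exact absurd (natDegree_le_of_dvd hdvd hd0)
      (not_le.mpr (natDegree_derivative_lt (hdeg i)))
  have hca : ∀ i, (C (α i : F)) ≠ 0 := by
    intro i
    intro h0
    rw [C_eq_zero, Nat.cast_eq_zero] at h0
    have := hα i
    omega
  have key : P ∣ derivative P * r ↔ (∏ i, u i) ∣ r := by
    constructor
    · intro hdvd
      apply Finset.prod_dvd_of_coprime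
      · intro i _ j hj hij
        exact hcop i j hij
      · intro i _
        set Q : F[X] := ∏ j ∈ Finset.univ.erase i, u j ^ α j with hQdef
        have hPQ : P = u i ^ α i * Q := (Finset.mul_prod_erase _ _ (Finset.mem_univ i)).symm
        have hdP : derivative P = C (α i : F) * u i ^ (α i - 1) * derivative (u i) * Q
            + u i ^ α i * derivative Q := by
          rw [hPQ, derivative_mul, derivative_pow]
        have h1 : u i ^ α i ∣ derivative P * r := dvd_trans ⟨Q, hPQ⟩ hdvd
        have h2 : u i ^ α i ∣ (C (α i : F) * u i ^ (α i - 1) * derivative (u i) * Q) * r := by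
          have h3 : u i ^ α i ∣ (u i ^ α i * derivative Q) * r :=
            (dvd_mul_right _ _).mul_right r
          have := h1
          rw [hdP, add_mul] at this
          simpa using (dvd_sub this h3)
        have hsplit : u i ^ α i = u i ^ (α i - 1) * u i := by
          rw [← pow_succ, Nat.sub_add_cancel (hα i)]
        rw [hsplit] at h2
        have h4 : (C (α i : F) * u i ^ (α i - 1) * derivative (u i) * Q) * r
            = u i ^ (α i - 1) * (C (α i : F) * derivative (u i) * Q * r) := by ring
        rw [h4, mul_dvd_mul_iff_left (pow_ne_zero _ (hu0 i))] at h2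
        have hnQ : ¬ u i ∣ Q := by
          intro hQ
          obtain ⟨j, hj, hdj⟩ := ((hprime i).dvd_finset_prod_iff _).mp hQ
          have hji : j ≠ i := Finset.ne_of_mem_erase hj
          exact hndvd i j (Ne.symm hji) ((hprime i).dvd_of_dvd_pow hdj)
        have hnC : ¬ u i ∣ C (α i : F) := by
          intro hC
          have := natDegree_le_of_dvd hC (hca i)
          simp [natDegree_C] at this
          exact hdeg i (by omega)
        rcases (hprime i).dvd_mul.mp h2 with h5 | h5
        · rcases (hprime i).dvd_mul.mp h5 with h6 | h6
          · rcases (hprime i).dvd_mul.mp h6 with h7 | h7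
            · exact absurd h7 hnC
            · exact absurd h7 (hder i)
          · exact absurd h6 hnQ
        · exact h5
    · rintro ⟨s, rfl⟩
      have main : ∀ i, u i ^ α i ∣ derivative P * ∏ j, u j := by
        intro i
        set Q : F[X] := ∏ j ∈ Finset.univ.erase i, u j ^ α j with hQdef
        have hPQ : P = u i ^ α i * Q := (Finset.mul_prod_erase _ _ (Finset.mem_univ i)).symm
        have hdP : derivative P = C (α i : F) * u i ^ (α i - 1) * derivative (u i) * Q
            + u i ^ α i * derivative Q := by
          rw [hPQ, derivative_mul, derivative_pow]
        have h1 : u i ^ (α i - 1) ∣ derivative P := by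
          rw [hdP]
          apply dvd_add
          · exact ⟨C (α i : F) * derivative (u i) * Q, by ring⟩
          · exact dvd_mul_of_dvd_left (pow_dvd_pow _ (Nat.sub_le _ _)) _
        have h2 : u i ∣ ∏ j, u j := Finset.dvd_prod_of_mem _ (Finset.mem_univ i)
        have hsplit : u i ^ α i = u i ^ (α i - 1) * u i := by
          rw [← pow_succ, Nat.sub_add_cancel (hα i)]
        rw [hsplit]
        exact mul_dvd_mul h1 h2
      have hPdvd : P ∣ derivative P * ∏ j, u j := by
        apply Finset.prod_dvd_of_coprime
        · intro i _ j hj hij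
          exact (hcop i j hij).pow
        · intro i _
          exact main i
      calc P ∣ derivative P * ∏ j, u j := hPdvd
        _ ∣ derivative P * ((∏ j, u j) * s) := by rw [← mul_assoc]; exact dvd_mul_right _ _
  have hCu : (C lam) ≠ 0 := by simpa using hlam
  have hdCP : derivative (C lam * P) = C lam * derivative P := by
    rw [derivative_mul, derivative_C, zero_mul, zero_add]
  rw [hdCP, mul_assoc, mul_dvd_mul_iff_left hCu, key]
end

section
/- Let F be a field of characteristic p > 0. For every f ∈ F[x], the (p−1)-st formal derivative of f'·f^{p−1} equals −(f')^p, where f' is the formal derivative of f. -/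
open Polynomial

section aux

open Finset Nat

private lemma stmt3N1 {p k : ℕ} (hp : p.Prime) (h1 : 1 ≤ k) (h2 : k < p) :
    (p.choose k / p) * k = (p-1).choose (k-1) := by
  obtain ⟨c, hc⟩ := hp.dvd_choose_self (k := k) (by omega) h2
  have ep : (p-1).succ = p := by omega
  have ek : (k-1).succ = k := by omega
  have key : p * ((p-1).choose (k-1)) = p.choose k * k := by
    have := Nat.add_one_mul_choose_eq (p-1) (k-1)
    rwa [← Nat.succ_eq_add_one (p-1), ← Nat.succ_eq_add_one (k-1), ep, ek] at this
  rw [hc, Nat.mul_div_cancel_left _ hp.pos]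
  have h5 : p * c * k = p * ((p-1).choose (k-1)) := by rw [key, hc]
  exact Nat.eq_of_mul_eq_mul_left hp.pos (by linarith [h5])

private lemma stmt3N2 {p k : ℕ} (hp : p.Prime) (h1 : 1 ≤ k) (h2 : k < p) :
    (p.choose k / p) * (p - k) = (p-1).choose k := by
  obtain ⟨c, hc⟩ := hp.dvd_choose_self (k := k) (by omega) h2
  have ep : (p-1).succ = p := by omega
  have key : p * ((p-1).choose k) = p.choose k * (p - k) := by
    have h3 := Nat.choose_succ_right_eq p k
    have h4 := Nat.add_one_mul_choose_eq (p-1) k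
    rw [← Nat.succ_eq_add_one (p-1), ep] at h4
    omega
  rw [hc, Nat.mul_div_cancel_left _ hp.pos]
  have h5 : p * c * (p - k) = p * ((p-1).choose k) := by rw [key, hc]
  exact Nat.eq_of_mul_eq_mul_left hp.pos (by linarith [h5])

private lemma stmt3_iterate_derivative_add {F : Type*} [Field F] (k : ℕ) (f g : F[X]) :
    derivative^[k] (f + g) = derivative^[k] f + derivative^[k] g := by
  induction k with
  | zero => simp
  | succ k ih => simp [Function.iterate_succ_apply', ih]

private lemma stmt3_iterate_derivative_p {F : Type*} [Field F] {p : ℕ} (hp : p.Prime)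
    [CharP F p] (f : F[X]) : derivative^[p] f = 0 := by
  ext m
  rw [coeff_iterate_derivative, coeff_zero, nsmul_eq_mul]
  have h : ((m + p).descFactorial p : F) = 0 := by
    have : (p : ℕ) ∣ (m + p).descFactorial p :=
      dvd_trans (Nat.dvd_factorial hp.pos le_rfl) (Nat.factorial_dvd_descFactorial _ _)
    obtain ⟨c, hc⟩ := this
    simp [hc, CharP.cast_eq_zero F p]
  rw [h, zero_mul]

private lemma stmt3_anti {F : Type*} [Field F] {p : ℕ} (hp : p.Prime) (f g : F[X]) :
    derivative (f + g) * (f + g) ^ (p - 1) =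
      derivative f * f ^ (p - 1) + derivative g * g ^ (p - 1) +
        derivative (∑ k ∈ Ico 1 p, C (((p.choose k / p : ℕ)) : F) * (f ^ k * g ^ (p - k))) := by
  have hRHS : derivative (∑ k ∈ Ico 1 p, C (((p.choose k / p : ℕ)) : F) * (f ^ k * g ^ (p - k)))
      = (∑ k ∈ Ico 1 p, (((p-1).choose (k-1) : ℕ) : F[X]) * f^(k-1) * g^(p-k)) * derivative f
      + (∑ k ∈ Ico 1 p, (((p-1).choose k : ℕ) : F[X]) * f^k * g^(p-k-1)) * derivative g := by
    rw [derivative_sum, Finset.sum_mul, Finset.sum_mul, ← Finset.sum_add_distrib]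
    refine Finset.sum_congr rfl ?_
    intro k hk
    simp only [Finset.mem_Ico] at hk
    rw [derivative_C_mul, derivative_mul, derivative_pow, derivative_pow]
    have e1' : ((((p-1).choose (k-1)) : ℕ) : F[X])
        = C ((p.choose k / p : ℕ) : F) * C ((k : ℕ) : F) := by
      rw [← C_mul, ← Nat.cast_mul, stmt3N1 hp hk.1 hk.2, C_eq_natCast]
    have e2' : ((((p-1).choose k) : ℕ) : F[X])
        = C ((p.choose k / p : ℕ) : F) * C (((p - k) : ℕ) : F) := by
      rw [← C_mul, ← Nat.cast_mul, stmt3N2 hp hk.1 hk.2, C_eq_natCast]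
    rw [e1', e2']
    ring
  obtain ⟨q, rfl⟩ : ∃ q, p = q + 1 := ⟨p - 1, by have := hp.pos; omega⟩
  simp only [Nat.add_sub_cancel] at hRHS ⊢
  have hU : f^q + ∑ k ∈ Ico 1 (q+1), ((q.choose (k-1) : ℕ) : F[X]) * f^(k-1) * g^(q+1-k)
      = ∑ j ∈ range (q+1), f^j * g^(q-j) * (q.choose j : F[X]) := by
    rw [Finset.sum_Ico_eq_sum_range, Finset.sum_range_succ]
    simp only [Nat.add_sub_cancel]
    rw [add_comm]
    congr 1
    · refine Finset.sum_congr rfl ?_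
      intro j hj
      have e1 : 1 + j - 1 = j := by omega
      have e2 : q + 1 - (1 + j) = q - j := by omega
      rw [e1, e2]
      ring
    · simp
  have hV : g^q + ∑ k ∈ Ico 1 (q+1), ((q.choose k : ℕ) : F[X]) * f^k * g^(q+1-k-1)
      = ∑ j ∈ range (q+1), f^j * g^(q-j) * (q.choose j : F[X]) := by
    rw [Finset.sum_Ico_eq_sum_range, Finset.sum_range_succ']
    simp only [Nat.add_sub_cancel]
    rw [add_comm (g ^ q)]
    congr 1
    · refine Finset.sum_congr rfl ?_
      intro j hj
      have e1 : 1 + j = j + 1 := by omega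
      have e2 : q + 1 - (j + 1) - 1 = q - (j + 1) := by omega
      rw [e1, e2]
      ring
    · simp
  have hL : derivative (f+g) * (f+g)^q
      = (f^q + ∑ k ∈ Ico 1 (q+1), ((q.choose (k-1) : ℕ) : F[X]) * f^(k-1) * g^(q+1-k))
          * derivative f
      + (g^q + ∑ k ∈ Ico 1 (q+1), ((q.choose k : ℕ) : F[X]) * f^k * g^(q+1-k-1))
          * derivative g := by
    rw [derivative_add, add_pow, hU, hV]
    ring
  rw [hL, hRHS]
  ring

private lemma stmt3_mono {F : Type*} [Field F] {p : ℕ} (hp : p.Prime) [CharP F p]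
    (n : ℕ) (c : F) :
    derivative^[p-1] (derivative (monomial n c) * (monomial n c)^(p-1))
      = -(derivative (monomial n c))^p := by
  haveI := Fact.mk hp
  rcases n with _ | m
  · simp [derivative_monomial, zero_pow hp.ne_zero]
  · obtain ⟨q, rfl⟩ : ∃ q, p = q + 1 := ⟨p-1, by have := hp.pos; omega⟩
    simp only [Nat.add_sub_cancel]
    rw [derivative_monomial]
    simp only [Nat.add_sub_cancel]
    rw [monomial_pow, monomial_mul_monomial]
    have eM : m + (m+1) * q = m * (q+1) + q := by ring
    rw [eM, ← C_mul_X_pow_eq_monomial, iterate_derivative_C_mul,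
      iterate_derivative_X_pow_eq_C_mul]
    simp only [Nat.add_sub_cancel]
    have hd : (((m * (q+1) + q).descFactorial q : ℕ) : F) = -1 := by
      have hz : (((m * (q+1) + q).descFactorial q : ℕ) : ZMod (q+1)) = -1 := by
        rw [Nat.descFactorial_eq_prod_range, Nat.cast_prod]
        have hcg : ∀ i ∈ range q,
            ((m * (q+1) + q - i : ℕ) : ZMod (q+1)) = ((q - i : ℕ) : ZMod (q+1)) := by
          intro i hi
          have e : m * (q+1) + q - i = m * (q+1) + (q - i) := by
            simp only [mem_range] at hi; omega
          rw [e, Nat.cast_add, Nat.cast_mul, ZMod.natCast_self, mul_zero, zero_add]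
        rw [Finset.prod_congr rfl hcg, ← Nat.cast_prod, ← Nat.descFactorial_eq_prod_range,
          Nat.descFactorial_self]
        have hw := ZMod.wilsons_lemma (q+1)
        simpa using hw
      calc (((m * (q+1) + q).descFactorial q : ℕ) : F)
          = ZMod.castHom (dvd_refl (q+1)) F
              (((m * (q+1) + q).descFactorial q : ℕ) : ZMod (q+1)) := by rw [map_natCast]
        _ = -1 := by rw [hz, map_neg, map_one]
    rw [hd, monomial_pow]
    have fermat : (((m+1 : ℕ) : F))^(q+1) = ((m+1 : ℕ) : F) := by
      have hzp : (((m+1 : ℕ) : ZMod (q+1)))^(q+1) = ((m+1:ℕ) : ZMod (q+1)) := ZMod.pow_card _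
      calc (((m+1 : ℕ) : F))^(q+1)
          = ZMod.castHom (dvd_refl (q+1)) F ((((m+1:ℕ) : ZMod (q+1)))^(q+1)) := by
            rw [map_pow, map_natCast]
        _ = _ := by rw [hzp, map_natCast]
    rw [← C_mul_X_pow_eq_monomial]
    have hc2 : (c * ((m+1:ℕ):F))^(q+1) = c^(q+1) * ((m+1:ℕ):F) := by
      rw [mul_pow, fermat]
    rw [hc2]
    have hC : C (c * ((m+1:ℕ):F) * c^q) * C (-1 : F) = C (-(c^(q+1) * ((m+1:ℕ):F))) := by
      rw [← C_mul]; congr 1; ring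
    calc C (c * ((m+1:ℕ):F) * c^q) * (C (-1:F) * X^(m*(q+1)))
        = (C (c * ((m+1:ℕ):F) * c^q) * C (-1:F)) * X^(m*(q+1)) := by ring
      _ = -(C (c^(q+1) * ((m+1:ℕ):F)) * X^(m*(q+1))) := by rw [hC, map_neg, neg_mul]

end aux

/-- In characteristic `p > 0`, for every `f ∈ F[x]`, the `(p-1)`-st formal
derivative of `f' · f^{p-1}` equals `-(f')^p`. -/
theorem stmt3 {F : Type*} [Field F] (p : ℕ) (hp : p.Prime) [CharP F p] (f : F[X]) :
    derivative^[p - 1] (derivative f * f ^ (p - 1)) = -(derivative f) ^ p := by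
  haveI := Fact.mk hp
  induction f using Polynomial.induction_on' with
  | monomial n a => exact stmt3_mono hp n a
  | add f g hf hg =>
    rw [stmt3_anti hp f g, stmt3_iterate_derivative_add, stmt3_iterate_derivative_add,
      hf, hg]
    have h0 : derivative^[p-1]
        (derivative (∑ k ∈ Finset.Ico 1 p, C (((p.choose k / p : ℕ)) : F)
          * (f ^ k * g ^ (p - k)))) = 0 := by
      rw [← Function.iterate_succ_apply]
      have hq : (p - 1).succ = p := by have := hp.pos; omega
      rw [hq]
      exact stmt3_iterate_derivative_p hp _
    rw [h0, add_zero, derivative_add, add_pow_char]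
    ring
end

section
/- Let F be a field of characteristic p > 0 and let h ∈ F[x] be nonzero. For v ∈ F[x], the polynomial v·h^{p−1} lies in the subring F[x^p] if and only if v'·h = v·h'. -/
open Polynomial

/-- In characteristic `p > 0` with `h ≠ 0`, `v·h^{p-1} ∈ F[x^p]` iff
`v'·h = v·h'`. -/
theorem stmt4 {F : Type*} [Field F] (p : ℕ) (hp : p.Prime) [CharP F p]
    (h : F[X]) (hh : h ≠ 0) (v : F[X]) :
    (∃ w : F[X], Polynomial.expand F p w = v * h ^ (p - 1)) ↔
      derivative v * h = v * derivative h := by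
  have hp1 : 1 ≤ p := hp.one_lt.le
  have hp2 : 2 ≤ p := hp.two_le
  have key : derivative (v * h ^ (p - 1)) =
      h ^ (p - 2) * (derivative v * h - v * derivative h) := by
    rw [derivative_mul, derivative_pow]
    have hcast : (C ((p - 1 : ℕ) : F) : F[X]) = -1 := by
      rw [Nat.cast_sub hp1, CharP.cast_eq_zero]
      simp
    have h21 : p - 2 + 1 = p - 1 := by omega
    have h11 : p - 1 - 1 = p - 2 := by omega
    have hpow : h ^ (p - 1) = h ^ (p - 2) * h := by
      rw [← pow_succ, h21]
    rw [hcast, h11, hpow]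
    ring
  constructor
  · rintro ⟨w, hw⟩
    have hd : derivative (v * h ^ (p - 1)) = 0 := by
      rw [← hw, derivative_expand]
      simp [CharP.cast_eq_zero_iff F[X] p]
    rw [key] at hd
    rcases mul_eq_zero.1 hd with h1 | h2
    · exact absurd h1 (pow_ne_zero _ hh)
    · exact sub_eq_zero.1 h2
  · intro heq
    refine ⟨contract p (v * h ^ (p - 1)), expand_contract p ?_ hp.ne_zero⟩
    rw [key, heq, sub_self, mul_zero]
end

section
/- Let F be a field of characteristic 0 and 0 ≠ h ∈ F[x]. Let π = h / gcd(h, h'), so that h divides π·h'. Define δ₀ : F[x] → F[x] by δ₀(r) = (rπ)' − r·(π h'/h). Then the kernel of δ₀ is exactly F · (h/π). -/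
open Polynomial

lemma der_top {F : Type*} [Field F] [CharZero F] {p : F[X]} (hp : p.natDegree ≠ 0) :
    (derivative p).natDegree = p.natDegree - 1 ∧
    (derivative p).leadingCoeff = p.natDegree * p.leadingCoeff := by
  have hp0 : p ≠ 0 := fun h => hp (by simp [h])
  have hc : (derivative p).coeff (p.natDegree - 1) = p.natDegree * p.leadingCoeff := by
    rw [coeff_derivative, Nat.sub_add_cancel (Nat.one_le_iff_ne_zero.2 hp)]
    push_cast [leadingCoeff, Nat.cast_sub (Nat.one_le_iff_ne_zero.2 hp)]
    ring
  have hne : (derivative p).coeff (p.natDegree - 1) ≠ 0 := by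
    rw [hc]
    exact mul_ne_zero (Nat.cast_ne_zero.2 hp) (leadingCoeff_ne_zero.2 hp0)
  have hdeg : (derivative p).natDegree = p.natDegree - 1 :=
    le_antisymm (natDegree_derivative_le p) (le_natDegree_of_ne_zero hne)
  exact ⟨hdeg, by rw [leadingCoeff, hdeg, hc]⟩

lemma wron_deg {F : Type*} [Field F] [CharZero F] {s g : F[X]} (hs : s ≠ 0) (hg : g ≠ 0)
    (hw : derivative s * g = s * derivative g) : s.natDegree = g.natDegree := by
  by_cases hns : s.natDegree = 0
  · by_cases hng : g.natDegree = 0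
    · rw [hns, hng]
    · have hs' : derivative s = 0 := by
        rw [eq_C_of_natDegree_eq_zero hns, derivative_C]
      rw [hs', zero_mul] at hw
      have : derivative g = 0 := by
        rcases mul_eq_zero.1 hw.symm with h1 | h1
        · exact absurd h1 hs
        · exact h1
      exact absurd (natDegree_eq_zero_of_derivative_eq_zero this) hng
  · by_cases hng : g.natDegree = 0
    · have hg' : derivative g = 0 := by
        rw [eq_C_of_natDegree_eq_zero hng, derivative_C]
      rw [hg', mul_zero] at hw
      rcases mul_eq_zero.1 hw with h1 | h1
      · exact absurd (natDegree_eq_zero_of_derivative_eq_zero h1) hns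
      · exact absurd h1 hg
    · obtain ⟨hds, hls⟩ := der_top (p := s) hns
      obtain ⟨hdg, hlg⟩ := der_top (p := g) hng
      have h1 := congrArg leadingCoeff hw
      rw [leadingCoeff_mul, leadingCoeff_mul, hls, hlg] at h1
      have hsl : s.leadingCoeff ≠ 0 := leadingCoeff_ne_zero.2 hs
      have hgl : g.leadingCoeff ≠ 0 := leadingCoeff_ne_zero.2 hg
      have h2 : ((s.natDegree : F) - g.natDegree) * (s.leadingCoeff * g.leadingCoeff) = 0 := by
        linear_combination h1
      rcases mul_eq_zero.1 h2 with h3 | h3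
      · exact_mod_cast sub_eq_zero.1 h3
      · rcases mul_eq_zero.1 h3 with h4 | h4
        · exact absurd h4 hsl
        · exact absurd h4 hgl

lemma wron_dep {F : Type*} [Field F] [CharZero F] {g : F[X]} (hg : g ≠ 0) (r : F[X])
    (hw : derivative r * g = r * derivative g) : ∃ c : F, r = C c * g := by
  rcases eq_or_ne r 0 with rfl | hr
  · exact ⟨0, by simp⟩
  have hdeg := wron_deg hr hg hw
  set s : F[X] := C g.leadingCoeff * r - C r.leadingCoeff * g with hs
  have hws : derivative s * g = s * derivative g := by
    simp only [hs, derivative_sub, derivative_mul, derivative_C, zero_mul, zero_add]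
    linear_combination (C g.leadingCoeff) * hw
  have hgl : g.leadingCoeff ≠ 0 := leadingCoeff_ne_zero.2 hg
  have hs0 : s = 0 := by
    by_contra hsne
    have hd := wron_deg hsne hg hws
    have hcoeff : s.coeff g.natDegree = 0 := by
      simp only [hs, coeff_sub, coeff_C_mul]
      rw [← hdeg, coeff_natDegree, hdeg, coeff_natDegree, mul_comm]
      ring
    rw [← hd] at hcoeff
    exact (leadingCoeff_ne_zero.2 hsne) hcoeff
  have heq : C g.leadingCoeff * r = C r.leadingCoeff * g := sub_eq_zero.1 hs0
  refine ⟨r.leadingCoeff / g.leadingCoeff, ?_⟩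
  have hC : (C g.leadingCoeff : F[X]) ≠ 0 := fun hc => hgl (by simpa using hc)
  apply mul_left_cancel₀ hC
  rw [heq, ← mul_assoc, ← C_mul]
  congr 2
  field_simp

/-- characteristic 0, `h ≠ 0`, `π = h / gcd(h,h')`,
`δ₀(r) = (rπ)' − r·(π h'/h)`.  Then `ker δ₀ = F·(h/π)`. -/
theorem stmt8 {F : Type*} [Field F] [CharZero F] [DecidableEq F]
    (h : F[X]) (hh : h ≠ 0)
    (π : F[X]) (hπ : π = h / EuclideanDomain.gcd h (derivative h))
    (δ₀ : F[X] → F[X])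
    (hδ₀ : ∀ r, δ₀ r = derivative (r * π) - r * (π * derivative h / h)) :
    ∀ r : F[X], δ₀ r = 0 ↔ ∃ c : F, r = C c * (h / π) := by
  intro r
  set g := EuclideanDomain.gcd h (derivative h) with hgdef
  have hg0 : g ≠ 0 := fun hz => hh ((EuclideanDomain.gcd_eq_zero_iff.1 hz).1)
  have hdl : g ∣ h := EuclideanDomain.gcd_dvd_left h (derivative h)
  have hdr : g ∣ derivative h := EuclideanDomain.gcd_dvd_right h (derivative h)
  have hmul : π * g = h := by
    rw [hπ, mul_comm]
    exact EuclideanDomain.mul_div_cancel' hg0 hdl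
  have hπ0 : π ≠ 0 := fun hz => hh (by rw [← hmul, hz, zero_mul])
  obtain ⟨q, hq⟩ := hdr
  have key : π * derivative h / h = q :=
    (EuclideanDomain.eq_div_of_mul_eq_right hh (by rw [hq, ← hmul]; ring)).symm
  have hhπ : h / π = g := (EuclideanDomain.eq_div_of_mul_eq_right hπ0 hmul).symm
  have hderiv : derivative h = derivative π * g + π * derivative g := by
    rw [← hmul]; simp [derivative_mul]
  have hqe : g * q = derivative π * g + π * derivative g := by
    rw [← hq]; exact hderiv
  have keyid : g * δ₀ r = π * (derivative r * g - r * derivative g) := by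
    rw [hδ₀, key, derivative_mul]
    linear_combination (-r) * hqe
  rw [hhπ]
  constructor
  · intro h0
    have h1 : π * (derivative r * g - r * derivative g) = 0 := by
      rw [← keyid, h0, mul_zero]
    have hw : derivative r * g = r * derivative g :=
      sub_eq_zero.1 ((mul_eq_zero.1 h1).resolve_left hπ0)
    exact wron_dep hg0 r hw
  · rintro ⟨c, rfl⟩
    have h2 : g * δ₀ (C c * g) = 0 := by
      rw [keyid]
      simp only [derivative_mul, derivative_C, zero_mul, zero_add]
      ring
    exact (mul_eq_zero.1 h2).resolve_left hg0
end

section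
/- Let F be a field of characteristic 0 and 0 ≠ h ∈ F[x], with π = h / gcd(h, h') and δ₀(r) = (rπ)' − r·(π h'/h). Then for every r ∈ F[x], the polynomial h/π divides δ₀(r) if and only if h/π divides r. -/
open Polynomial

private lemma pow_dvd_exp_le {R : Type*} [CommMonoidWithZero R] [IsCancelMulZero R] {p d : R} (hp : Prime p)
    (hd : ¬ p ∣ d) {a b : ℕ} (H : p ^ a ∣ p ^ b * d) : a ≤ b := by
  by_contra hab
  push_neg at hab
  obtain ⟨c, hc⟩ := (pow_dvd_pow p hab).trans H
  rw [pow_succ, mul_assoc] at hc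
  exact hd ⟨c, mul_left_cancel₀ (pow_ne_zero b hp.ne_zero) hc⟩

private lemma deriv_prime_ne_zero {F : Type*} [Field F] [CharZero F] {p : F[X]}
    (hp : Prime p) : derivative p ≠ 0 := by
  intro h0
  obtain ⟨c, rfl⟩ := Polynomial.natDegree_eq_zero.1
    (Polynomial.natDegree_eq_zero_of_derivative_eq_zero h0)
  exact hp.not_unit (Polynomial.isUnit_C.2 (isUnit_iff_ne_zero.2
    (by rintro rfl; simp at hp)))

private lemma prime_not_dvd_deriv {F : Type*} [Field F] [CharZero F] {p : F[X]}
    (hp : Prime p) : ¬ p ∣ derivative p := fun hdvd =>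
  absurd (Polynomial.degree_le_of_dvd hdvd (deriv_prime_ne_zero hp))
    (not_le.2 (Polynomial.degree_derivative_lt hp.ne_zero))

/-- exact valuation of the derivative -/
private lemma deriv_val {F : Type*} [Field F] [CharZero F] {p u : F[X]} (hp : Prime p)
    (hu : ¬ p ∣ u) (e : ℕ) :
    ∃ w : F[X], derivative (p ^ (e+1) * u) = p ^ e * w ∧ ¬ p ∣ w := by
  refine ⟨C (((e+1 : ℕ)) : F) * derivative p * u + p * derivative u, ?_, ?_⟩
  · rw [derivative_mul, derivative_pow, Nat.add_sub_cancel]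
    ring
  · intro hdvd
    have h1 : p ∣ C (((e+1 : ℕ)) : F) * derivative p * u := by
      have h2 := dvd_sub hdvd (dvd_mul_right p (derivative u))
      rwa [add_sub_cancel_right] at h2
    rcases hp.dvd_mul.1 h1 with h2 | h2
    · rcases hp.dvd_mul.1 h2 with h3 | h3
      · exact hp.not_unit (isUnit_of_dvd_unit h3
          (Polynomial.isUnit_C.2 (isUnit_iff_ne_zero.2 (Nat.cast_ne_zero.2 (Nat.succ_ne_zero e)))))
      · exact prime_not_dvd_deriv hp h3
    · exact hu h2

/-- Wronskian valuation identity -/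
private lemma W_val {F : Type*} [Field F] (p u v : F[X]) (m k : ℕ) :
    (p ^ (k+1) * v) * derivative (p ^ m * u) - (p ^ m * u) * derivative (p ^ (k+1) * v)
      = p ^ (m + k) * ((C ((m : ℕ) : F) - C (((k+1 : ℕ)) : F)) * derivative p * u * v
          + p * (derivative u * v - u * derivative v)) := by
  rw [derivative_mul, derivative_mul, derivative_pow p m, derivative_pow p (k+1),
    Nat.add_sub_cancel]
  rcases m with _ | m
  · simp only [Nat.cast_zero, map_zero, zero_mul, pow_zero, zero_add, one_mul, zero_sub]
    ring
  · rw [Nat.add_sub_cancel]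
    ring

/-- if every prime power dividing `g` divides `r`, then `g ∣ r` -/
private lemma dvd_of_forall_prime_pow_dvd {F : Type*} [Field F]
    {g r : F[X]} (hg : g ≠ 0) (hr : r ≠ 0)
    (H : ∀ p : F[X], Prime p → ∀ n : ℕ, p ^ n ∣ g → p ^ n ∣ r) : g ∣ r := by
  classical
  rw [UniqueFactorizationMonoid.dvd_iff_normalizedFactors_le_normalizedFactors hg hr,
    Multiset.le_iff_count]
  intro p
  by_cases hp : p ∈ UniqueFactorizationMonoid.normalizedFactors g
  · have hpp := UniqueFactorizationMonoid.prime_of_normalized_factor p hp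
    have hnorm := UniqueFactorizationMonoid.normalize_normalized_factor p hp
    have h1 := UniqueFactorizationMonoid.emultiplicity_eq_count_normalizedFactors
      hpp.irreducible hg
    have h2 := UniqueFactorizationMonoid.emultiplicity_eq_count_normalizedFactors
      hpp.irreducible hr
    rw [hnorm] at h1 h2
    have h3 : emultiplicity p g ≤ emultiplicity p r :=
      emultiplicity_le_emultiplicity_iff.2 fun n => H p hpp n
    rw [h1, h2] at h3
    exact_mod_cast h3
  · simp [Multiset.count_eq_zero.2 hp]

/-- characteristic 0, `h ≠ 0`, `π = h / gcd(h,h')`,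
`δ₀(r) = (rπ)' − r·(π h'/h)`.  Then `h/π ∣ δ₀(r)` iff `h/π ∣ r`. -/
theorem stmt9 {F : Type*} [Field F] [CharZero F] [DecidableEq F]
    (h : F[X]) (hh : h ≠ 0)
    (π : F[X]) (hπ : π = h / EuclideanDomain.gcd h (derivative h))
    (δ₀ : F[X] → F[X])
    (hδ₀ : ∀ r, δ₀ r = derivative (r * π) - r * (π * derivative h / h)) :
    ∀ r : F[X], (h / π) ∣ δ₀ r ↔ (h / π) ∣ r := by
  set g := EuclideanDomain.gcd h (derivative h) with hg_def
  have hgdvdh : g ∣ h := EuclideanDomain.gcd_dvd_left h (derivative h)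
  have hgdvdh' : g ∣ derivative h := EuclideanDomain.gcd_dvd_right h (derivative h)
  have hg0 : g ≠ 0 := fun e => hh ((EuclideanDomain.gcd_eq_zero_iff.1 e).1)
  have hhgπ : g * π = h := by rw [hπ]; exact EuclideanDomain.mul_div_cancel' hg0 hgdvdh
  have hπ0 : π ≠ 0 := by rintro rfl; rw [mul_zero] at hhgπ; exact hh hhgπ.symm
  have hhπg : h / π = g := by rw [← hhgπ, mul_comm, mul_div_cancel_left₀ _ hπ0]
  obtain ⟨t, ht⟩ := hgdvdh'
  have htt : π * derivative h / h = t := by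
    have h1 : π * derivative h = h * t := by rw [ht, ← hhgπ]; ring
    rw [h1, mul_div_cancel_left₀ _ hh]
  have key : ∀ s : F[X], g * δ₀ s = π * (g * derivative s - s * derivative g) := by
    intro s
    have e2 : g * t = derivative g * π + g * derivative π := by
      rw [← ht, ← hhgπ, derivative_mul]
    rw [hδ₀ s, htt, derivative_mul]
    linear_combination (-s) * e2
  intro r
  rw [hhπg]
  constructor
  · intro hdvd
    rcases eq_or_ne r 0 with rfl | hr0
    · exact dvd_zero g
    have hgg : g * g ∣ π * (g * derivative r - r * derivative g) := by
      rw [← key r]; exact mul_dvd_mul_left g hdvd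
    apply dvd_of_forall_prime_pow_dvd hg0 hr0
    intro p hp n hpng
    rcases Nat.eq_zero_or_pos n with rfl | hn
    · simpa using one_dvd r
    obtain ⟨k, v, hv, hgkv⟩ := WfDvdMonoid.max_power_factor hg0 hp.irreducible
    obtain ⟨m, u, hu, hrmu⟩ := WfDvdMonoid.max_power_factor hr0 hp.irreducible
    have hnk : n ≤ k := pow_dvd_exp_le hp hv (hgkv ▸ hpng)
    suffices hkm : k ≤ m by
      rw [hrmu]
      exact dvd_mul_of_dvd_left (pow_dvd_pow p (hnk.trans hkm)) u
    by_contra hmk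
    push_neg at hmk
    obtain ⟨k₁, rfl⟩ : ∃ k₁, k = k₁ + 1 :=
      ⟨k - 1, (Nat.succ_pred_eq_of_pos (hn.trans_le hnk)).symm⟩
    -- structure of h at p
    obtain ⟨e, a, ha, hhea⟩ := WfDvdMonoid.max_power_factor hh hp.irreducible
    have hpg : p ∣ g := hgkv ▸ dvd_mul_of_dvd_left (dvd_pow_self p (Nat.succ_ne_zero k₁)) v
    obtain ⟨e₁, rfl⟩ : ∃ e₁, e = e₁ + 1 := by
      rcases Nat.eq_zero_or_pos e with rfl | he
      · exfalso; rw [pow_zero, one_mul] at hhea; exact ha (hhea ▸ hpg.trans hgdvdh)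
      · exact ⟨e - 1, (Nat.succ_pred_eq_of_pos he).symm⟩
    obtain ⟨w, hw, hw'⟩ := deriv_val hp ha e₁
    have hdh : derivative h = p ^ e₁ * w := by rw [hhea, hw]
    have hk_le : k₁ + 1 ≤ e₁ := by
      apply pow_dvd_exp_le hp hw'
      rw [← hdh]
      exact (hgkv ▸ dvd_mul_right _ v : p ^ (k₁+1) ∣ g).trans ⟨t, ht⟩
    have he_le : e₁ ≤ k₁ + 1 := by
      apply pow_dvd_exp_le hp hv
      rw [← hgkv]
      exact EuclideanDomain.dvd_gcd
        (hhea ▸ dvd_mul_of_dvd_left (pow_dvd_pow p (Nat.le_succ e₁)) a)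
        (hdh ▸ dvd_mul_right _ w)
    have he : e₁ = k₁ + 1 := le_antisymm he_le hk_le
    subst he
    -- structure of π at p
    have hπeq : p * a = v * π := by
      apply mul_left_cancel₀ (pow_ne_zero (k₁+1) hp.ne_zero)
      calc p ^ (k₁+1) * (p * a) = p ^ (k₁+1+1) * a := by ring
        _ = h := hhea.symm
        _ = g * π := hhgπ.symm
        _ = p ^ (k₁+1) * (v * π) := by rw [hgkv]; ring
    have hpπ : p ∣ π := by
      rcases hp.dvd_mul.1 ⟨a, hπeq.symm⟩ with h2 | h2
      · exact absurd h2 hv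
      · exact h2
    obtain ⟨π₁, rfl⟩ := hpπ
    have ha2 : a = v * π₁ := by
      apply mul_left_cancel₀ hp.ne_zero
      linear_combination hπeq
    have hπ₁ : ¬ p ∣ π₁ := fun h2 => ha (ha2 ▸ dvd_mul_of_dvd_right h2 v)
    -- valuation of the Wronskian
    have hWval := W_val p u v m k₁ (F := F)
    set c : F[X] := (C ((m : ℕ) : F) - C (((k₁+1 : ℕ)) : F)) * derivative p * u * v
      + p * (derivative u * v - u * derivative v) with hc_def
    have hpc : ¬ p ∣ c := by
      intro hdvdc
      have h1 : p ∣ (C ((m : ℕ) : F) - C (((k₁+1 : ℕ)) : F)) * derivative p * u * v := by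
        have h2 : (C ((m : ℕ) : F) - C (((k₁+1 : ℕ)) : F)) * derivative p * u * v
            = c - p * (derivative u * v - u * derivative v) := by rw [hc_def]; ring
        rw [h2]
        exact dvd_sub hdvdc (dvd_mul_right _ _)
      rcases hp.dvd_mul.1 h1 with h2 | h2
      · rcases hp.dvd_mul.1 h2 with h3 | h3
        · rcases hp.dvd_mul.1 h3 with h4 | h4
          · have hcne : ((m : F) - ((k₁+1 : ℕ) : F)) ≠ 0 := by
              rw [sub_ne_zero]
              exact_mod_cast fun hmm => absurd hmm (Nat.ne_of_lt hmk)
            have : IsUnit (C ((m : ℕ) : F) - C (((k₁+1 : ℕ)) : F)) := by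
              rw [← Polynomial.C_sub]
              exact Polynomial.isUnit_C.2 (isUnit_iff_ne_zero.2 hcne)
            exact hp.not_unit (isUnit_of_dvd_unit h4 this)
          · exact prime_not_dvd_deriv hp h4
        · exact hu h3
      · exact hv h2
    -- final contradiction
    have hππW : π₁ * (g * derivative r - r * derivative g) = p ^ (m + k₁) * (π₁ * c) := by
      rw [hgkv, hrmu, hWval]; ring
    have hbig : p ^ (2 * k₁ + 2) ∣ p ^ (m + k₁ + 1) * (π₁ * c) := by
      have h1 : p ^ (2 * k₁ + 2) ∣ g * g := by
        rw [hgkv]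
        exact Dvd.intro (v * v) (by ring)
      refine h1.trans (hgg.trans (dvd_of_eq ?_))
      calc p * π₁ * (g * derivative r - r * derivative g)
          = p * (p ^ (m + k₁) * (π₁ * c)) := by rw [← hππW]; ring
        _ = p ^ (m + k₁ + 1) * (π₁ * c) := by ring
    have hle := pow_dvd_exp_le hp (fun h2 => (hp.dvd_mul.1 h2).elim hπ₁ hpc) hbig
    omega
  · rintro ⟨s, rfl⟩
    have h3 : δ₀ (g * s) = g * (π * derivative s) :=
      mul_left_cancel₀ hg0 (by rw [key (g * s), derivative_mul]; ring)
    exact ⟨π * derivative s, h3⟩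
end

section
/- Let F be a field of characteristic 0. Then the Lie algebra Der_F(F[t]) of F-linear derivations of the polynomial ring F[t] is a simple Lie algebra: it is nonabelian and its only Lie ideals are 0 and itself. -/
open Polynomial

noncomputable section Aux

variable {F : Type*} [Field F]

/-- The derivation `p · d/dX`. -/
noncomputable def wd (p : F[X]) : Derivation F F[X] F[X] := Polynomial.mkDerivation F p

lemma wd_apply (p f : F[X]) : wd p f = derivative f * p := by
  rw [wd, Polynomial.mkDerivation_apply, smul_eq_mul]

lemma wd_surj (D : Derivation F F[X] F[X]) : wd (D X) = D := by
  ext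
  simp [wd_apply]

lemma wd_inj {p q : F[X]} (h : wd p = wd q) : p = q := by
  have := congrArg (fun D : Derivation F F[X] F[X] => D X) h
  simpa [wd_apply] using this

lemma wd_bracket (p q : F[X]) :
    ⁅wd p, wd q⁆ = wd (derivative q * p - derivative p * q) := by
  apply Polynomial.derivation_ext
  simp only [Derivation.commutator_apply, wd_apply, derivative_X, one_mul]

lemma wd_smul (c : F) (p : F[X]) : wd (c • p) = c • wd p := by
  apply Polynomial.derivation_ext
  simp only [wd_apply, Derivation.smul_apply, derivative_X, one_mul]

lemma deriv_surj [CharZero F] (q : F[X]) : ∃ p : F[X], derivative p = q := by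
  induction q using Polynomial.induction_on' with
  | add f g hf hg =>
    obtain ⟨p, hp⟩ := hf
    obtain ⟨r, hr⟩ := hg
    exact ⟨p + r, by simp [hp, hr]⟩
  | monomial n a =>
    refine ⟨C (((n : F) + 1)⁻¹ * a) * X ^ (n + 1), ?_⟩
    have hn : ((n : F) + 1) ≠ 0 := by exact_mod_cast n.succ_ne_zero
    rw [derivative_C_mul, derivative_X_pow, Nat.add_sub_cancel, ← mul_assoc, ← C_mul,
      ← C_mul_X_pow_eq_monomial]
    congr 1
    push_cast
    field_simp

end Aux

/-- In characteristic 0, the Lie algebra of `F`-linear derivations of `F[t]`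
(the Witt algebra) is a simple Lie algebra: nonabelian, with no Lie ideals besides `0` and
itself. -/
theorem stmt11 {F : Type*} [Field F] [CharZero F] :
    LieAlgebra.IsSimple F (Derivation F F[X] F[X]) := by
  constructor
  · -- every ideal is ⊥ or ⊤
    intro I
    by_cases hI : I = ⊥
    · exact Or.inl hI
    right
    -- get a nonzero element of I
    obtain ⟨D, hDI, hD0⟩ : ∃ D : Derivation F F[X] F[X], D ∈ I ∧ D ≠ 0 := by
      by_contra h
      push_neg at h
      exact hI (by
        ext x
        simp only [LieSubmodule.mem_bot]
        exact ⟨fun hx => by by_contra hne; exact hne (h x hx), fun hx => hx ▸ I.zero_mem⟩)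
    have hp0 : D X ≠ 0 := by
      intro h
      apply hD0
      rw [← wd_surj D, h]
      ext
      simp [wd_apply]
    have hWD : wd (D X) ∈ I := by rw [wd_surj]; exact hDI
    -- Step 1: wd 1 ∈ I, by induction on the degree
    have key : ∀ n : ℕ, ∀ p : F[X], p ≠ 0 → p.natDegree ≤ n → wd p ∈ I →
        wd (1 : F[X]) ∈ I := by
      intro n
      induction n with
      | zero =>
        intro p hp hdeg hmem
        have : p = C (p.coeff 0) := Polynomial.eq_C_of_natDegree_eq_zero (Nat.le_zero.mp hdeg)
        have hc : p.coeff 0 ≠ 0 := fun h => hp (by rw [this, h, map_zero])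
        have : wd p = (p.coeff 0) • wd (1 : F[X]) := by
          rw [← wd_smul]
          congr 1
          rw [smul_eq_C_mul, mul_one, ← this]
        have h2 : (p.coeff 0)⁻¹ • wd p ∈ I := I.smul_mem _ hmem
        rwa [this, smul_smul, inv_mul_cancel₀ hc, one_smul] at h2
      | succ n ih =>
        intro p hp hdeg hmem
        by_cases h0 : p.natDegree = 0
        · -- same as base case
          have : p = C (p.coeff 0) := Polynomial.eq_C_of_natDegree_eq_zero h0
          have hc : p.coeff 0 ≠ 0 := fun h => hp (by rw [this, h, map_zero])
          have heq : wd p = (p.coeff 0) • wd (1 : F[X]) := by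
            rw [← wd_smul]
            congr 1
            rw [smul_eq_C_mul, mul_one, ← this]
          have h2 : (p.coeff 0)⁻¹ • wd p ∈ I := I.smul_mem _ hmem
          rwa [heq, smul_smul, inv_mul_cancel₀ hc, one_smul] at h2
        · have hd : derivative p ≠ 0 := fun h =>
            h0 (Polynomial.natDegree_eq_zero_of_derivative_eq_zero h)
          have hlt : (derivative p).natDegree < p.natDegree :=
            Polynomial.natDegree_derivative_lt h0
          have hmem' : wd (derivative p) ∈ I := by
            have : ⁅wd (1 : F[X]), wd p⁆ ∈ I := I.lie_mem hmem
            rwa [wd_bracket, derivative_one, zero_mul, mul_one, sub_zero] at this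
          exact ih (derivative p) hd (by omega) hmem'
    have hone : wd (1 : F[X]) ∈ I :=
      key (D X).natDegree (D X) hp0 le_rfl hWD
    -- Step 2: every wd q ∈ I
    have hall : ∀ q : F[X], wd q ∈ I := by
      intro q
      obtain ⟨p, hp⟩ := deriv_surj (F := F) (-q)
      have : ⁅wd p, wd (1 : F[X])⁆ ∈ I := I.lie_mem hone
      rw [wd_bracket, derivative_one, zero_mul, mul_one, zero_sub, hp, neg_neg] at this
      exact this
    rw [eq_top_iff]
    intro E _
    rw [← wd_surj E]
    exact hall (E X)
  · -- nonabelian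
    intro habel
    have := habel.trivial (wd (1 : F[X])) (wd X)
    rw [wd_bracket] at this
    have h1 : (derivative (X : F[X]) * 1 - derivative 1 * X) = 1 := by simp
    rw [h1] at this
    have := congrArg (fun D : Derivation F F[X] F[X] => D X) this
    simp [wd_apply] at this
end

section
/- Let F be a field of characteristic p > 0 and let u ∈ F[x] be a monic irreducible polynomial with u' ≠ 0. If r ∈ F[x] and u^{p−1} divides r', then u^p divides r'. -/
open Polynomial

private lemma comp_dvd_comp {K : Type*} [CommRing K] {d f : K[X]} (h : d ∣ f) (q : K[X]) :
    d.comp q ∣ f.comp q := by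
  obtain ⟨c, rfl⟩ := h
  exact ⟨c.comp q, by rw [mul_comp]⟩

private lemma shift_lemma {K : Type*} [Field K] (p : ℕ) (hp : p.Prime) [CharP K p] (a : K)
    (g : K[X]) (h : (X - C a) ^ (p - 1) ∣ derivative g) :
    (X - C a) ^ p ∣ derivative g := by
  have h1 : X ^ (p - 1) ∣ (derivative g).comp (X + C a) := by
    have := comp_dvd_comp h (X + C a)
    simpa [pow_comp, sub_comp, X_comp, C_comp, add_sub_cancel_right] using this
  have hcomp : (derivative g).comp (X + C a) = derivative (g.comp (X + C a)) := by
    simp [derivative_comp]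
  rw [hcomp] at h1
  have h2 : X ^ p ∣ derivative (g.comp (X + C a)) := by
    rw [X_pow_dvd_iff] at h1 ⊢
    intro d hd
    rcases lt_or_eq_of_le (Nat.le_of_lt_succ (by omega : d < (p - 1) + 1)) with h' | h'
    · exact h1 d h'
    · rw [coeff_derivative]
      have : ((d : K) + 1) = (p : K) := by
        have : d + 1 = p := by omega
        exact_mod_cast congrArg (Nat.cast : ℕ → K) this
      rw [this, CharP.cast_eq_zero, mul_zero]
  rw [← hcomp] at h2
  have h3 := comp_dvd_comp h2 (X - C a)
  rw [pow_comp, X_comp, comp_assoc] at h3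
  simpa [add_comp, X_comp, C_comp] using h3

/-- characteristic `p > 0`; if `u` is monic irreducible with `u' ≠ 0`
and `u^{p−1} ∣ r'`, then `u^p ∣ r'`. -/
theorem stmt14 {F : Type*} [Field F] (p : ℕ) (hp : p.Prime) [CharP F p]
    (u : F[X]) (humonic : u.Monic) (huirr : Irreducible u)
    (hu' : derivative u ≠ 0) (r : F[X]) (hdvd : u ^ (p - 1) ∣ derivative r) :
    u ^ p ∣ derivative r := by
  classical
  by_cases hr0 : derivative r = 0
  · rw [hr0]; exact dvd_zero _
  set K := AlgebraicClosure F
  have : CharP K p := charP_of_injective_algebraMap (algebraMap F K).injective p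
  set φ := algebraMap F K
  rw [← map_dvd_map' φ, Polynomial.map_pow]
  set v := u.map φ with hv
  set f := (derivative r).map φ with hf
  have hf0 : f ≠ 0 := (Polynomial.map_ne_zero_iff φ.injective).mpr hr0
  have hv0 : v ≠ 0 := (Polynomial.map_ne_zero_iff φ.injective).mpr humonic.ne_zero
  have husep : u.Separable := (separable_iff_derivative_ne_zero huirr).mpr hu'
  have hvsep : v.Separable := husep.map
  have hvnodup : v.roots.Nodup := nodup_roots hvsep
  have hdvdf : v ^ (p - 1) ∣ f := by
    rw [hv, hf, ← Polynomial.map_pow]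
    exact Polynomial.map_dvd φ hdvd
  refine (IsAlgClosed.splits (v ^ p)).dvd_of_roots_le_roots (pow_ne_zero _ hv0) ?_
  rw [Multiset.le_iff_count]
  intro a
  rw [roots_pow, Multiset.count_nsmul]
  by_cases ha : a ∈ v.roots
  · have hcount1 : v.roots.count a = 1 := Multiset.count_eq_one_of_mem hvnodup ha
    rw [hcount1, mul_one, count_roots]
    rw [le_rootMultiplicity_iff hf0]
    have hXa : (X - C a) ∣ v := dvd_iff_isRoot.mpr (isRoot_of_mem_roots ha)
    have h1 : (X - C a) ^ (p - 1) ∣ f := (pow_dvd_pow_of_dvd hXa _).trans hdvdf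
    have : f = derivative (r.map φ) := by rw [hf, derivative_map]
    rw [this] at h1 ⊢
    exact shift_lemma p hp a _ h1
  · rw [Multiset.count_eq_zero_of_notMem ha, mul_zero]
    exact Nat.zero_le _
end

section
/- Let F be a field of characteristic p > 0 and let 0 ≠ w ∈ F[x^p]. If r ∈ F[x] and w divides r', then there exists s ∈ F[x] with r' = w·s'. Equivalently, the quotient F[x]/im(d/dx) is a torsion-free F[x^p]-module. -/
open Polynomial

/-- characteristic `p > 0`; if `0 ≠ w ∈ F[x^p]` divides `r'`, then
`r' = w·s'` for some `s` — i.e. `F[x]/im(d/dx)` is torsion free over `F[x^p]`. -/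
theorem stmt15 {F : Type*} [Field F] (p : ℕ) (hp : p.Prime) [CharP F p]
    (w : F[X]) (hw : w ≠ 0) (hwp : ∃ w₀ : F[X], w = Polynomial.expand F p w₀)
    (r : F[X]) (hdvd : w ∣ derivative r) :
    ∃ s : F[X], derivative r = w * derivative s := by
  obtain ⟨q, hq⟩ := hdvd
  obtain ⟨w₀, hw₀⟩ := hwp
  have hp0 : 0 < p := hp.pos
  -- coefficients of r' vanish at indices ≡ -1 mod p
  have hr : ∀ n, p ∣ n + 1 → (derivative r).coeff n = 0 := by
    intro n hn
    rw [coeff_derivative]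
    have h0 : ((n : F) + 1) = 0 := by
      have := (CharP.cast_eq_zero_iff F p (n + 1)).2 hn
      push_cast at this
      exact this
    rw [h0, mul_zero]
  -- coefficients of w vanish at indices not divisible by p
  have hwc : ∀ a, ¬ p ∣ a → w.coeff a = 0 := by
    intro a ha
    rw [hw₀, coeff_expand hp0, if_neg ha]
  -- the "bad" part of q
  set Q : F[X] := ∑ n ∈ q.support.filter (fun n => p ∣ n + 1), C (q.coeff n) * X ^ n
    with hQdef
  have hQcoeff : ∀ k, Q.coeff k = if p ∣ k + 1 then q.coeff k else 0 := by
    intro k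
    rw [hQdef, finset_sum_coeff]
    simp only [coeff_C_mul, coeff_X_pow, mul_ite, mul_one, mul_zero]
    rw [Finset.sum_ite_eq _ k (fun n => q.coeff n)]
    by_cases h1 : p ∣ k + 1
    · by_cases h2 : q.coeff k = 0 <;>
        simp [Finset.mem_filter, mem_support_iff, h1, h2]
    · simp [Finset.mem_filter, h1]
  have hmul : w * Q = 0 := by
    ext n
    rw [coeff_mul, coeff_zero]
    by_cases hn : p ∣ n + 1
    · have : ∑ x ∈ Finset.HasAntidiagonal.antidiagonal n, w.coeff x.1 * Q.coeff x.2
          = ∑ x ∈ Finset.HasAntidiagonal.antidiagonal n, w.coeff x.1 * q.coeff x.2 := by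
        refine Finset.sum_congr rfl fun x hx => ?_
        rw [Finset.HasAntidiagonal.mem_antidiagonal] at hx
        by_cases ha : p ∣ x.1
        · have hb : p ∣ x.2 + 1 := by
            have : x.2 + 1 = (n + 1) - x.1 := by omega
            rw [this]
            exact Nat.dvd_sub hn ha
          rw [hQcoeff, if_pos hb]
        · rw [hwc _ ha, zero_mul, zero_mul]
      rw [this, ← coeff_mul, ← hq]
      exact hr n hn
    · refine Finset.sum_eq_zero fun x hx => ?_
      rw [Finset.HasAntidiagonal.mem_antidiagonal] at hx
      by_cases ha : p ∣ x.1
      · have hb : ¬ p ∣ x.2 + 1 := by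
          intro hb
          apply hn
          have : n + 1 = x.1 + (x.2 + 1) := by omega
          rw [this]
          exact dvd_add ha hb
        rw [hQcoeff, if_neg hb, mul_zero]
      · rw [hwc _ ha, zero_mul]
  have hQ0 : Q = 0 := by
    rcases mul_eq_zero.1 hmul with h | h
    · exact absurd h hw
    · exact h
  have hqc : ∀ n, p ∣ n + 1 → q.coeff n = 0 := by
    intro n hn
    have := hQcoeff n
    rw [hQ0, coeff_zero, if_pos hn] at this
    exact this.symm
  -- build the antiderivative of q
  refine ⟨q.sum fun n a => C (a / ((n : F) + 1)) * X ^ (n + 1), ?_⟩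
  rw [hq]
  congr 1
  rw [Polynomial.sum, derivative_sum]
  conv_lhs => rw [← sum_C_mul_X_pow_eq q, Polynomial.sum]
  refine Finset.sum_congr rfl fun n hn => ?_
  rw [mem_support_iff] at hn
  have hnd : ¬ p ∣ n + 1 := fun h => hn (hqc n h)
  have hne : ((n : F) + 1) ≠ 0 := by
    intro h0
    apply hnd
    rw [← CharP.cast_eq_zero_iff F p (n + 1)]
    push_cast
    exact h0
  rw [derivative_C_mul_X_pow, Nat.add_sub_cancel]
  congr 2
  push_cast
  field_simp
end

section
/- Let F be a field of characteristic p > 0 and 0 ≠ h ∈ F[x]. Then there is a unique monic polynomial ρ ∈ F[x^p] dividing h such that every monic divisor of h belonging to F[x^p] divides ρ; i.e., ρ is the unique monic divisor of h in F[x^p] of maximal degree. -/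
open Polynomial

/-- Combination lemma: two monic divisors of `h` of the form `expand F p _` have a common
multiple of the same form dividing `h`. -/
private lemma stmt16_combine {F : Type*} [Field F] {p : ℕ} (hp : 0 < p)
    {h u v : F[X]} (hu : u.Monic) (hv : v.Monic)
    (ha : Polynomial.expand F p u ∣ h) (hb : Polynomial.expand F p v ∣ h) :
    ∃ c : F[X], c.Monic ∧ (∃ w : F[X], c = Polynomial.expand F p w) ∧ c ∣ h ∧
      Polynomial.expand F p u ∣ c ∧ Polynomial.expand F p v ∣ c := by
  classical
  have hv0 : v ≠ 0 := hv.ne_zero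
  set d : F[X] := GCDMonoid.gcd u v with hd
  have hd0 : d ≠ 0 := gcd_ne_zero_of_right hv0
  set u' : F[X] := u / d with hu'
  set v' : F[X] := v / d with hv'
  have hud : d * u' = u := EuclideanDomain.mul_div_cancel' hd0 (gcd_dvd_left u v)
  have hvd : d * v' = v := EuclideanDomain.mul_div_cancel' hd0 (gcd_dvd_right u v)
  have hcop : IsCoprime u' v' := isCoprime_div_gcd_div_gcd hv0
  -- monicity of v'
  have hv'm : v'.Monic := by
    have hdm : d.Monic := by
      have := Polynomial.monic_normalize hd0
      rwa [hd, normalize_gcd] at this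
    exact hdm.of_mul_monic_left (hvd.symm ▸ hv)
  refine ⟨Polynomial.expand F p (u * v'), (hu.mul hv'm).expand hp, ⟨u * v', rfl⟩, ?_, ?_, ?_⟩
  · -- expand (u * v') ∣ h
    obtain ⟨h1, hh1⟩ := ha
    have hbd : Polynomial.expand F p v' ∣ h1 := by
      have h2 : Polynomial.expand F p d * Polynomial.expand F p v' ∣
          Polynomial.expand F p d * (Polynomial.expand F p u' * h1) := by
        rw [← mul_assoc, ← map_mul, hvd, ← map_mul, hud, ← hh1]
        exact hb
      have hd' : Polynomial.expand F p d ≠ 0 := fun h0 => hd0 (by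
        simpa using (Polynomial.expand_eq_zero hp).mp h0)
      have h3 : Polynomial.expand F p v' ∣ Polynomial.expand F p u' * h1 :=
        (mul_dvd_mul_iff_left hd').mp h2
      have h4 : IsCoprime ((Polynomial.expand F p) v') ((Polynomial.expand F p) u') :=
        IsCoprime.map hcop.symm (Polynomial.expand F p).toRingHom
      exact h4.dvd_of_dvd_mul_left h3
    rw [hh1, map_mul]
    exact mul_dvd_mul_left _ hbd
  · rw [map_mul]; exact dvd_mul_right _ _
  · rw [map_mul, ← hvd, map_mul]
    exact mul_dvd_mul (⟨Polynomial.expand F p u', by rw [← hud, map_mul]⟩ :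
      Polynomial.expand F p d ∣ Polynomial.expand F p u) (dvd_refl (Polynomial.expand F p v'))

/-- characteristic `p > 0`, `h ≠ 0`: there is a unique monic `ρ ∈ F[x^p]`
dividing `h` such that every monic divisor of `h` lying in `F[x^p]` divides `ρ`. -/
theorem stmt16 {F : Type*} [Field F] (p : ℕ) (hp : p.Prime) [CharP F p]
    (h : F[X]) (hh : h ≠ 0) :
    ∃! ρ : F[X], ρ.Monic ∧ (∃ w : F[X], ρ = Polynomial.expand F p w) ∧ ρ ∣ h ∧
      ∀ d : F[X], d.Monic → (∃ w : F[X], d = Polynomial.expand F p w) → d ∣ h → d ∣ ρ := by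
  classical
  have hp0 : 0 < p := hp.pos
  set Q : F[X] → Prop := fun ρ => ρ.Monic ∧ (∃ w : F[X], ρ = Polynomial.expand F p w) ∧ ρ ∣ h
    with hQ
  set P : ℕ → Prop := fun n => ∃ ρ : F[X], Q ρ ∧ ρ.natDegree = n with hP
  have hP0 : P 0 := ⟨1, ⟨monic_one, ⟨1, by simp⟩, one_dvd h⟩, natDegree_one⟩
  set n : ℕ := Nat.findGreatest P h.natDegree with hn
  have hPn : P n := Nat.findGreatest_spec (Nat.zero_le _) hP0
  obtain ⟨ρ, ⟨hρm, hρw, hρh⟩, hρd⟩ := hPn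
  have hmax : ∀ c : F[X], Q c → c.natDegree ≤ n := by
    intro c ⟨hcm, hcw, hch⟩
    exact Nat.le_findGreatest (Polynomial.natDegree_le_of_dvd hch hh) ⟨c, ⟨hcm, hcw, hch⟩, rfl⟩
  have key : ∀ d : F[X], d.Monic → (∃ w : F[X], d = Polynomial.expand F p w) → d ∣ h → d ∣ ρ := by
    intro d hdm ⟨w, hw⟩ hdh
    obtain ⟨w', hw'⟩ := hρw
    have hwm : w.Monic := (monic_expand_iff hp0).mp (hw ▸ hdm)
    have hw'm : w'.Monic := (monic_expand_iff hp0).mp (hw' ▸ hρm)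
    obtain ⟨c, hcm, hcw, hch, hc1, hc2⟩ :=
      stmt16_combine hp0 hw'm hwm (hw' ▸ hρh) (hw ▸ hdh)
    -- c has degree ≤ n = deg ρ, and ρ ∣ c, both monic, so c = ρ
    have hcn : c.natDegree ≤ n := hmax c ⟨hcm, hcw, hch⟩
    rw [← hw'] at hc1
    obtain ⟨e, he⟩ := hc1
    have he0 : e ≠ 0 := by
      intro h0; rw [h0, mul_zero] at he; exact hcm.ne_zero he
    have hdeg : c.natDegree = ρ.natDegree + e.natDegree := by
      rw [he, Polynomial.natDegree_mul (hρm.ne_zero) he0]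
    have hem : e.Monic := hρm.of_mul_monic_left (he ▸ hcm)
    have he1 : e = 1 := by
      have : e.natDegree = 0 := by omega
      exact hem.natDegree_eq_zero.mp this
    rw [he1, mul_one] at he
    rw [hw, ← he]
    exact hc2
  refine ⟨ρ, ⟨hρm, hρw, hρh, key⟩, ?_⟩
  rintro ρ' ⟨hρ'm, hρ'w, hρ'h, hkey'⟩
  exact Polynomial.eq_of_monic_of_associated hρ'm hρm
    (associated_of_dvd_dvd (key ρ' hρ'm hρ'w hρ'h) (hkey' ρ hρm hρw hρh))
end

section
/- Let F be a field of characteristic p > 0 and 0 ≠ h ∈ F[x]. Write h^{p−1} = ∑_{i=0}^{p−1} h̄_i x^i with h̄_i ∈ F[x^p]. Consider the F[x^p]-linear map θ : F[x] → F[x^p] given by θ(r) = (r·h^{p−1})^{(p−1)} (the (p−1)-st formal derivative). Then the image of θ is the ideal of F[x^p] generated by gcd(h̄_0, …, h̄_{p−1}), and the kernel of θ is a free F[x^p]-module of rank p−1. -/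
open Polynomial Finset

section StmtAux
variable {F : Type*} [Field F]

private lemma descFact_cast_eq_neg_one (p : ℕ) (hp : p.Prime) [CharP F p] :
    (((p-1).descFactorial (p-1) : ℕ) : F) = -1 := by
  have : Fact p.Prime := ⟨hp⟩
  have hw : ((Nat.factorial (p-1) : ℕ) : ZMod p) = -1 := ZMod.wilsons_lemma p
  have h2 := congrArg (ZMod.castHom (dvd_refl p) F) hw
  rw [map_natCast, map_neg, map_one] at h2
  rw [Nat.descFactorial_self, h2]

private lemma descFact_cast_eq_zero (p : ℕ) (hp : p.Prime) [CharP F p] {m : ℕ}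
    (h1 : p ≤ m) (h2 : m ≤ 2*p - 2) :
    ((m.descFactorial (p-1) : ℕ) : F) = 0 := by
  rw [CharP.cast_eq_zero_iff F p, Nat.descFactorial_eq_prod_range]
  have hmem : m - p ∈ Finset.range (p-1) := by
    have := hp.two_le; simp only [Finset.mem_range]; omega
  have hd := Finset.dvd_prod_of_mem (fun i => m - i) hmem
  simp only [Nat.sub_sub_self h1] at hd
  exact hd

private lemma derivative_expand_eq_zero (p : ℕ) [CharP F p] (a : F[X]) :
    derivative (expand F p a) = 0 := by
  rw [Polynomial.derivative_expand]
  have : ((p : ℕ) : F[X]) = 0 := CharP.cast_eq_zero _ _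
  rw [this]
  ring

private lemma iterDeriv_expand_mul_X_pow (p : ℕ) [CharP F p] (a : F[X]) (m k : ℕ) :
    derivative^[k] (expand F p a * X ^ m)
      = ((m.descFactorial k : ℕ) : F[X]) * (expand F p a * X ^ (m - k)) := by
  induction k with
  | zero => simp
  | succ k ih =>
    rw [Function.iterate_succ_apply', ih, derivative_mul, derivative_natCast, zero_mul,
      zero_add, derivative_mul, derivative_expand_eq_zero, zero_mul, zero_add,
      derivative_X_pow, Nat.descFactorial_succ]
    push_cast
    rw [C_eq_natCast]
    push_cast
    rw [show m - k - 1 = m - (k+1) by omega]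
    ring

private lemma iterDeriv_key (p : ℕ) (hp : p.Prime) [CharP F p] (a : F[X]) (m : ℕ)
    (hm : m ≤ 2*p-2) :
    derivative^[p-1] (expand F p a * X ^ m) = if m = p - 1 then -expand F p a else 0 := by
  rw [iterDeriv_expand_mul_X_pow]
  have hC : ((m.descFactorial (p-1) : ℕ) : F[X]) = C (((m.descFactorial (p-1)):ℕ) : F) :=
    (C_eq_natCast _).symm
  split
  · next hmp =>
    rw [hC, hmp, descFact_cast_eq_neg_one p hp]
    simp
  · next hmp =>
    rcases lt_or_gt_of_ne hmp with hlt | hgt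
    · rw [(Nat.descFactorial_eq_zero_iff_lt).mpr hlt]
      simp
    · have hpm : p ≤ m := by have := hp.two_le; omega
      rw [hC, descFact_cast_eq_zero p hp hpm hm]
      simp

private noncomputable def coordAux (p : ℕ) (r : F[X]) (j : ℕ) : F[X] :=
  ∑ n ∈ Finset.range (r.natDegree + 1), monomial n (r.coeff (n * p + j))

private lemma coeff_coordAux (p : ℕ) (hp0 : 0 < p) (r : F[X]) (j n : ℕ) :
    (coordAux p r j).coeff n = r.coeff (n * p + j) := by
  rw [coordAux, finset_sum_coeff]
  simp only [coeff_monomial]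
  rw [Finset.sum_ite_eq']
  split
  · rfl
  · next hn =>
    symm
    apply Polynomial.coeff_eq_zero_of_natDegree_lt
    simp only [Finset.mem_range] at hn
    have h1 : n * 1 ≤ n * p := Nat.mul_le_mul_left n hp0
    omega

private lemma coeff_sum_expand (p : ℕ) (hp0 : 0 < p) (c : Fin p → F[X]) (n : ℕ) (i : Fin p) :
    (∑ j : Fin p, expand F p (c j) * X ^ (j:ℕ)).coeff (n * p + (i:ℕ)) = (c i).coeff n := by
  rw [finset_sum_coeff]
  rw [Finset.sum_eq_single i]
  · rw [coeff_mul_X_pow']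
    rw [if_pos (by omega)]
    rw [show n * p + (i:ℕ) - (i:ℕ) = n * p by omega]
    rw [coeff_expand hp0, if_pos (dvd_mul_left p n), Nat.mul_div_cancel n hp0]
  · intro j _ hji
    rw [coeff_mul_X_pow']
    split
    · next hle =>
      rw [coeff_expand hp0]
      rw [if_neg]
      intro hdvd
      obtain ⟨q, hq⟩ := hdvd
      have heq : n * p + (i:ℕ) = p * q + (j:ℕ) := by omega
      have hmod : (n * p + (i:ℕ)) % p = (p * q + (j:ℕ)) % p := by rw [heq]
      rw [Nat.mul_add_mod] at hmod
      rw [mul_comm n p, Nat.mul_add_mod] at hmod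
      rw [Nat.mod_eq_of_lt i.isLt, Nat.mod_eq_of_lt j.isLt] at hmod
      exact hji (Fin.ext hmod.symm)
    · rfl
  · intro hni
    exact absurd (Finset.mem_univ i) hni

private lemma sum_expand_coordAux (p : ℕ) (hp0 : 0 < p) (r : F[X]) :
    ∑ j : Fin p, expand F p (coordAux p r (j:ℕ)) * X ^ (j:ℕ) = r := by
  ext m
  have h := coeff_sum_expand p hp0 (fun j : Fin p => coordAux p r (j:ℕ)) (m/p)
    ⟨m % p, Nat.mod_lt _ hp0⟩
  simp only [Fin.val_mk] at h
  rw [Nat.div_add_mod'] at h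
  rw [h, coeff_coordAux p hp0, Nat.div_add_mod']

private lemma coords_unique (p : ℕ) (hp0 : 0 < p) (c c' : Fin p → F[X])
    (h : ∑ j : Fin p, expand F p (c j) * X ^ (j:ℕ) = ∑ j : Fin p, expand F p (c' j) * X ^ (j:ℕ)) :
    c = c' := by
  funext i
  ext n
  have h2 := congrArg (fun q => Polynomial.coeff q (n * p + (i:ℕ))) h
  simpa only [coeff_sum_expand p hp0] using h2

private lemma expand_dvd_iff (p : ℕ) (hp0 : 0 < p) (a b : F[X]) :
    expand F p a ∣ expand F p b ↔ a ∣ b := by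
  constructor
  · intro hd
    by_cases ha : a = 0
    · subst ha
      simp only [map_zero, zero_dvd_iff] at hd ⊢
      exact (expand_eq_zero hp0).mp hd
    · set a' := a * C a.leadingCoeff⁻¹ with ha'
      have hmon : a'.Monic := monic_mul_leadingCoeff_inv ha
      have haa' : a ∣ a' := Dvd.intro _ rfl
      have hda' : expand F p a ∣ expand F p (b %ₘ a') := by
        rw [Polynomial.modByMonic_eq_sub_mul_div b a', map_sub, map_mul]
        exact dvd_sub hd (Dvd.dvd.mul_right (_root_.map_dvd (expand F p) haa') _)
      by_cases hz : b %ₘ a' = 0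
      · have : a' ∣ b := (Polynomial.modByMonic_eq_zero_iff_dvd hmon).mp hz
        exact dvd_trans haa' this
      · exfalso
        have h1 : (b %ₘ a').degree < a'.degree := degree_modByMonic_lt b hmon
        have h2 : (b %ₘ a').natDegree < a'.natDegree := natDegree_lt_natDegree hz h1
        have hC : (C a.leadingCoeff⁻¹) ≠ 0 := by
          simp [inv_ne_zero, leadingCoeff_ne_zero.mpr ha]
        have h3 : a'.natDegree = a.natDegree := by
          rw [ha', natDegree_mul ha hC, natDegree_C]
          omega
        have h4 : (expand F p (b %ₘ a')) ≠ 0 := by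
          rw [Ne, expand_eq_zero hp0]; exact hz
        have h5 := Polynomial.natDegree_le_of_dvd hda' h4
        rw [natDegree_expand, natDegree_expand] at h5
        have := Nat.le_of_mul_le_mul_right h5 hp0
        omega
  · intro h
    exact _root_.map_dvd (expand F p) h

private lemma exists_gcd_rep {ι : Type*} [DecidableEq ι] [DecidableEq F]
    (s : Finset ι) (v : ι → F[X]) :
    ∃ t : ι → F[X], ∑ j ∈ s, t j * v j = s.gcd v := by
  induction s using Finset.induction_on with
  | empty => exact ⟨fun _ => 0, by simp⟩
  | @insert a s ha ih =>
    obtain ⟨t, ht⟩ := ih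
    obtain ⟨x, y, hxy⟩ := exists_gcd_eq_mul_add_mul (v a) (s.gcd v)
    refine ⟨fun j => if j = a then x else y * t j, ?_⟩
    rw [Finset.sum_insert ha, Finset.gcd_insert, hxy]
    beta_reduce
    rw [if_pos rfl, mul_comm x (v a)]
    congr 1
    rw [← ht, Finset.sum_mul]
    apply Finset.sum_congr rfl
    intro j hj
    rw [if_neg (by rintro rfl; exact ha hj)]
    ring

private lemma iterDeriv_sum {ι : Type*} (k : ℕ) (s : Finset ι) (f : ι → F[X]) :
    derivative^[k] (∑ i ∈ s, f i) = ∑ i ∈ s, derivative^[k] (f i) := by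
  simp only [← Module.End.pow_apply (Polynomial.derivative (R := F))]
  exact map_sum _ _ _

private lemma theta_eq (p : ℕ) (hp : p.Prime) [CharP F p] (w c : Fin p → F[X]) :
    derivative^[p-1] ((∑ j : Fin p, expand F p (c j) * X ^ (j:ℕ)) *
        (∑ i : Fin p, expand F p (w i) * X ^ (i:ℕ)))
      = -expand F p (∑ j : Fin p, c j * w ⟨p - 1 - (j:ℕ), by have := j.isLt; omega⟩) := by
  have hp0 : 0 < p := hp.pos
  rw [Finset.sum_mul_sum]
  have hterm : ∀ (j i : Fin p), (expand F p (c j) * X ^ (j:ℕ)) * (expand F p (w i) * X ^ (i:ℕ))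
      = expand F p (c j * w i) * X ^ ((j:ℕ) + (i:ℕ)) := by
    intro j i; rw [map_mul, pow_add]; ring
  simp only [hterm]
  rw [iterDeriv_sum]
  have h2 : ∀ j : Fin p,
      derivative^[p-1] (∑ i : Fin p, expand F p (c j * w i) * X ^ ((j:ℕ)+(i:ℕ)))
        = -expand F p (c j * w ⟨p - 1 - (j:ℕ), by have := j.isLt; omega⟩) := by
    intro j
    rw [iterDeriv_sum]
    rw [Finset.sum_eq_single (⟨p - 1 - (j:ℕ), by have := j.isLt; omega⟩ : Fin p)]
    · rw [iterDeriv_key p hp _ _ (by have := j.isLt; simp only [Fin.val_mk]; omega)]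
      rw [if_pos (by have := j.isLt; simp only [Fin.val_mk]; omega)]
    · intro i _ hne
      rw [iterDeriv_key p hp _ _ (by have := j.isLt; have := i.isLt; omega)]
      rw [if_neg]
      intro hcond
      apply hne
      have hj := j.isLt
      have hi := i.isLt
      exact Fin.ext (by simp only [Fin.val_mk]; omega)
    · intro hni
      exact absurd (Finset.mem_univ _) hni
  rw [Finset.sum_congr rfl (fun j _ => h2 j)]
  rw [map_sum, ← Finset.sum_neg_distrib]

end StmtAux

/-- characteristic `p > 0`, `h ≠ 0`.  Write
`h^{p−1} = ∑_{i<p} h̄_i x^i` with `h̄_i ∈ F[x^p]`, and let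
`θ(r) = (r·h^{p−1})^{(p−1)}`, an `F[x^p]`-linear map `F[x] → F[x^p]`.  Then the image of
`θ` is the ideal of `F[x^p]` generated by a gcd `g` (in `F[x^p]`) of the `h̄_i`, and the
kernel of `θ` is a free `F[x^p]`-module of rank `p−1`. -/
theorem stmt17 {F : Type*} [Field F] (p : ℕ) (hp : p.Prime) [CharP F p]
    (h : F[X]) (hh : h ≠ 0) (hbar : Fin p → F[X])
    (hbarmem : ∀ i, ∃ w : F[X], hbar i = Polynomial.expand F p w)
    (hbarsum : h ^ (p - 1) = ∑ i : Fin p, hbar i * X ^ (i : ℕ)) :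
    ∃ g : F[X],
      -- `g` is a gcd of the `h̄_i` inside the subring `F[x^p]`
      (∃ w : F[X], g = Polynomial.expand F p w) ∧
      (∀ i, g ∣ hbar i) ∧
      (∀ d : F[X], (∃ w : F[X], d = Polynomial.expand F p w) →
        (∀ i, d ∣ hbar i) → d ∣ g) ∧
      -- the image of `θ` is the ideal of `F[x^p]` generated by `g`
      (∀ f : F[X],
        (∃ r : F[X], derivative^[p - 1] (r * h ^ (p - 1)) = f) ↔
          ∃ c : F[X], f = Polynomial.expand F p c * g) ∧
      -- the kernel of `θ` is free of rank `p−1` over `F[x^p]`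
      ∃ b : Fin (p - 1) → F[X],
        (∀ j, derivative^[p - 1] (b j * h ^ (p - 1)) = 0) ∧
        ∀ r : F[X], derivative^[p - 1] (r * h ^ (p - 1)) = 0 →
          ∃! c : Fin (p - 1) → F[X],
            r = ∑ j : Fin (p - 1), Polynomial.expand F p (c j) * b j := by
  classical
  have hp0 : 0 < p := hp.pos
  -- choose the `F[x^p]`-coordinates of `h^(p-1)`
  choose w hw using hbarmem
  have hH : h ^ (p-1) = ∑ i : Fin p, expand F p (w i) * X ^ (i:ℕ) := by
    rw [hbarsum]; exact Finset.sum_congr rfl (fun i _ => by rw [hw i])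
  set ρ : Fin p → Fin p := fun j => ⟨p - 1 - (j:ℕ), by have := j.isLt; omega⟩ with hρ
  have hρρ : ∀ j, ρ (ρ j) = j := by
    intro j
    have := j.isLt
    apply Fin.ext
    simp only [hρ]
    omega
  set v : Fin p → F[X] := fun j => w (ρ j) with hv
  have θeq : ∀ c : Fin p → F[X],
      derivative^[p-1] ((∑ j : Fin p, expand F p (c j) * X ^ (j:ℕ)) * h ^ (p-1))
        = -expand F p (∑ j : Fin p, c j * v j) := by
    intro c
    rw [hH]
    exact theta_eq p hp w c
  set g0 : F[X] := Finset.gcd Finset.univ v with hg0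
  have hg0dvd : ∀ j, g0 ∣ v j := fun j => Finset.gcd_dvd (Finset.mem_univ j)
  have hg0ne : g0 ≠ 0 := by
    intro h0
    have hz : ∀ j, v j = 0 := fun j => (Finset.gcd_eq_zero_iff.mp h0) j (Finset.mem_univ _)
    have hwz : ∀ i, w i = 0 := by
      intro i
      have h2 : w (ρ (ρ i)) = 0 := hz (ρ i)
      rwa [hρρ] at h2
    have hzero : h ^ (p-1) = 0 := by rw [hH]; simp [hwz]
    exact pow_ne_zero _ hh hzero
  obtain ⟨t, ht⟩ := exists_gcd_rep Finset.univ v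
  rw [← hg0] at ht
  choose u hu using hg0dvd
  have htu : ∑ j : Fin p, t j * u j = 1 := by
    apply mul_left_cancel₀ hg0ne
    rw [mul_one, Finset.mul_sum]
    conv_rhs => rw [← ht]
    apply Finset.sum_congr rfl
    intro j _
    rw [hu j]
    ring
  have hsum_v : ∀ c : Fin p → F[X], ∑ j : Fin p, c j * v j = g0 * ∑ j : Fin p, c j * u j := by
    intro c
    rw [Finset.mul_sum]
    apply Finset.sum_congr rfl
    intro j _
    rw [hu j]
    ring
  refine ⟨expand F p g0, ⟨g0, rfl⟩, ?_, ?_, ?_, ?_⟩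
  · -- g divides each hbar i
    intro i
    rw [hw i]
    apply _root_.map_dvd (expand F p)
    have h2 : g0 ∣ w (ρ (ρ i)) := ⟨u (ρ i), hu (ρ i)⟩
    rwa [hρρ] at h2
  · -- g is a greatest common divisor
    rintro d ⟨e, rfl⟩ hd
    apply _root_.map_dvd (expand F p)
    apply Finset.dvd_gcd
    intro j _
    have := hd (ρ j)
    rw [hw (ρ j)] at this
    exact (expand_dvd_iff p hp0 e _).mp this
  · -- image of θ
    intro f
    constructor
    · rintro ⟨r, rfl⟩
      have hr := sum_expand_coordAux p hp0 r
      rw [← hr, θeq, hsum_v]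
      exact ⟨-∑ j : Fin p, coordAux p r (j:ℕ) * u j, by rw [map_neg, map_mul, neg_mul, mul_comm]⟩
    · rintro ⟨c, rfl⟩
      refine ⟨∑ j : Fin p, expand F p (-(c * t j)) * X ^ (j:ℕ), ?_⟩
      rw [θeq]
      have hs : ∑ j : Fin p, (-(c * t j)) * v j = -(c * g0) := by
        conv_rhs => rw [← ht]
        rw [Finset.mul_sum, ← Finset.sum_neg_distrib]
        apply Finset.sum_congr rfl
        intro j _
        ring
      rw [hs, map_neg, neg_neg, map_mul, mul_comm]
  · -- kernel of θ
    let φ : (Fin p → F[X]) →ₗ[F[X]] F[X] :=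
      { toFun := fun c => ∑ j : Fin p, c j * u j
        map_add' := by
          intro x y
          simp only [Pi.add_apply, add_mul, Finset.sum_add_distrib]
        map_smul' := by
          intro m x
          simp only [Pi.smul_apply, smul_eq_mul, RingHom.id_apply, Finset.mul_sum, mul_assoc] }
    have hφt : φ t = 1 := htu
    set K := LinearMap.ker φ with hK
    let E : (Fin p → F[X]) ≃ₗ[F[X]] (K × F[X]) :=
      { toFun := fun c => (⟨c - φ c • t, by
            simp only [hK, LinearMap.mem_ker, map_sub, map_smul, smul_eq_mul, hφt, mul_one,
              sub_self]⟩, φ c)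
        invFun := fun kx => kx.1.1 + kx.2 • t
        map_add' := by
          intro x y
          refine Prod.ext ?_ ?_
          · apply Subtype.ext
            show (x + y) - φ (x + y) • t = (x - φ x • t) + (y - φ y • t)
            rw [map_add, add_smul]
            abel
          · show φ (x + y) = φ x + φ y
            exact map_add φ x y
        map_smul' := by
          intro m x
          refine Prod.ext ?_ ?_
          · apply Subtype.ext
            show m • x - φ (m • x) • t = m • (x - φ x • t)
            rw [map_smul, smul_sub, smul_smul, smul_eq_mul]
          · show φ (m • x) = m • φ x
            exact map_smul φ m x
        left_inv := by
          intro c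
          show (c - φ c • t) + φ c • t = c
          abel
        right_inv := by
          rintro ⟨⟨k, hk⟩, x⟩
          have hk0 : φ k = 0 := hk
          refine Prod.ext ?_ ?_
          · apply Subtype.ext
            show (k + x • t) - φ (k + x • t) • t = k
            rw [map_add, map_smul, hk0, hφt, zero_add, smul_eq_mul, mul_one,
              add_sub_cancel_right]
          · show φ (k + x • t) = x
            rw [map_add, map_smul, hk0, hφt, zero_add, smul_eq_mul, mul_one] }
    obtain ⟨n, bK⟩ := Submodule.basisOfPid (Pi.basisFun F[X] (Fin p)) K
    have hnp : n + 1 = p := by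
      have e := ((bK.prod (Module.Basis.singleton (Fin 1) F[X])).map E.symm).indexEquiv
        (Pi.basisFun F[X] (Fin p))
      have hcard := Fintype.card_congr e
      simpa using hcard
    have hpn : p - 1 = n := by omega
    set B : Fin (p-1) → (Fin p → F[X]) := fun k => (bK (Fin.cast hpn k) : Fin p → F[X]) with hB
    have hBmem : ∀ k, φ (B k) = 0 := fun k => (bK (Fin.cast hpn k)).2
    have hBind : LinearIndependent F[X] B := by
      have h1 : LinearIndependent F[X]
          (fun k : Fin n => ((bK k : K) : Fin p → F[X])) := by
        have h2 := bK.linearIndependent.map' K.subtype (Submodule.ker_subtype K)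
        exact h2
      exact h1.comp (Fin.cast hpn) (Fin.cast_injective hpn)
    have hbdef : ∀ (c' : Fin (p-1) → F[X]),
        ∑ k : Fin (p-1), expand F p (c' k) * (∑ i : Fin p, expand F p (B k i) * X ^ (i:ℕ))
          = ∑ i : Fin p, expand F p ((∑ k : Fin (p-1), c' k • B k) i) * X ^ (i:ℕ) := by
      intro c'
      calc ∑ k : Fin (p-1), expand F p (c' k) * (∑ i : Fin p, expand F p (B k i) * X ^ (i:ℕ))
          = ∑ k : Fin (p-1), ∑ i : Fin p, expand F p (c' k * B k i) * X ^ (i:ℕ) := by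
            apply Finset.sum_congr rfl; intro k _
            rw [Finset.mul_sum]
            apply Finset.sum_congr rfl; intro i _
            rw [map_mul]; ring
        _ = ∑ i : Fin p, ∑ k : Fin (p-1), expand F p (c' k * B k i) * X ^ (i:ℕ) :=
            Finset.sum_comm
        _ = ∑ i : Fin p, expand F p ((∑ k : Fin (p-1), c' k • B k) i) * X ^ (i:ℕ) := by
            apply Finset.sum_congr rfl; intro i _
            rw [Finset.sum_apply]
            simp only [Pi.smul_apply, smul_eq_mul]
            rw [map_sum, Finset.sum_mul]
    refine ⟨fun k => ∑ i : Fin p, expand F p (B k i) * X ^ (i:ℕ), ?_, ?_⟩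
    · intro j
      rw [θeq (B j), hsum_v]
      have hz : ∑ i : Fin p, B j i * u i = 0 := hBmem j
      rw [hz, mul_zero, map_zero, neg_zero]
    · intro r hr
      set c : Fin p → F[X] := fun j => coordAux p r (j:ℕ) with hc
      have hrc : ∑ j : Fin p, expand F p (c j) * X ^ (j:ℕ) = r := sum_expand_coordAux p hp0 r
      have h0 : expand F p (∑ j : Fin p, c j * v j) = 0 := by
        have h0' := θeq c
        rw [hrc, hr] at h0'
        exact neg_eq_zero.mp h0'.symm
      have h1 : ∑ j : Fin p, c j * v j = 0 := by
        apply expand_injective hp0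
        rw [h0, map_zero]
      have h2 : φ c = 0 := by
        have h3 : g0 * φ c = 0 := by
          calc g0 * φ c = ∑ j : Fin p, c j * v j := (hsum_v c).symm
          _ = 0 := h1
        exact (mul_eq_zero.mp h3).resolve_left hg0ne
      have hcK : c ∈ K := h2
      set a : Fin (p-1) → F[X] := fun k => bK.repr ⟨c, hcK⟩ (Fin.cast hpn k) with ha
      have hrep : ∑ k : Fin (p-1), a k • B k = c := by
        have h4 := bK.sum_repr ⟨c, hcK⟩
        have h5 := congrArg (Subtype.val) h4
        rw [AddSubmonoidClass.coe_finset_sum] at h5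
        simp only [SetLike.val_smul] at h5
        refine Eq.trans ?_ h5
        exact Fintype.sum_equiv (finCongr hpn) _ _ (fun k => rfl)
      refine ⟨a, ?_, ?_⟩
      · beta_reduce
        rw [hbdef a, hrep, hrc]
      · intro c' hc'
        beta_reduce at hc'
        have h6 : ∑ i : Fin p, expand F p ((∑ k : Fin (p-1), c' k • B k) i) * X ^ (i:ℕ)
            = ∑ i : Fin p, expand F p (c i) * X ^ (i:ℕ) := by
          rw [← hbdef c', ← hc', hrc]
        have h7 : (∑ k : Fin (p-1), c' k • B k) = c := coords_unique p hp0 _ _ h6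
        have h8 : ∑ k : Fin (p-1), (c' k - a k) • B k = 0 := by
          simp only [sub_smul, Finset.sum_sub_distrib, h7, hrep, sub_self]
        have h9 := Fintype.linearIndependent_iff.mp hBind (fun k => c' k - a k) h8
        funext k
        exact sub_eq_zero.mp (h9 k)
end

section
/- Let F be a field of characteristic 0, and let A ⊆ End_F(F[x]) be the unital F-subalgebra generated by the multiplication operator X (multiplication by x) and the differentiation operator Y = d/dx (so YX − XY = 1, the Weyl algebra). Then every F-linear derivation of A is inner: for every derivation D : A → A there exists a ∈ A with D(b) = ab − ba for all b ∈ A. -/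
open Polynomial

section Stmt18Aux
set_option linter.unusedSectionVars false
variable {F : Type*} [Field F] [CharZero F]
local notation "Xo" => LinearMap.mulLeft F (Polynomial.X : F[X])
local notation "Yo" => (Polynomial.derivative : F[X] →ₗ[F] F[X])

lemma st18_comm1 : (Yo : Module.End F F[X]) * Xo = Xo * Yo + 1 := by
  refine LinearMap.ext fun f => ?_
  simp [Module.End.mul_apply, derivative_mul]
  ring

lemma st18_key1 {R : Type*} [Ring R] {x y : R} (h : y * x = x * y + 1) :
    ∀ j : ℕ, y ^ (j+1) * x = x * y ^ (j+1) + (j+1) • y ^ j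
  | 0 => by simpa using h
  | (j+1) => by
    have ih := st18_key1 h j
    calc y ^ (j+1+1) * x = y * (y ^ (j+1) * x) := by rw [← mul_assoc, ← pow_succ']
      _ = y * (x * y ^ (j+1)) + (j+1) • (y * y ^ j) := by rw [ih, mul_add, mul_smul_comm]
      _ = (y * x) * y ^ (j+1) + (j+1) • y ^ (j+1) := by rw [← mul_assoc, ← pow_succ']
      _ = x * y ^ (j+1+1) + (y ^ (j+1) + (j+1) • y ^ (j+1)) := by
          rw [h, add_mul, one_mul, mul_assoc, ← pow_succ', add_assoc]
      _ = x * y ^ (j+1+1) + (j+1+1) • y ^ (j+1) := by rw [succ_nsmul' (y ^ (j+1)) (j+1)]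

lemma st18_key2 {R : Type*} [Ring R] {x y : R} (h : y * x = x * y + 1) :
    ∀ i : ℕ, y * x ^ (i+1) = x ^ (i+1) * y + (i+1) • x ^ i
  | 0 => by simpa using h
  | (i+1) => by
    have ih := st18_key2 h i
    calc y * x ^ (i+1+1) = (y * x ^ (i+1)) * x := by rw [mul_assoc, ← pow_succ]
      _ = x ^ (i+1) * (y * x) + (i+1) • (x ^ i * x) := by rw [ih, add_mul, mul_assoc, smul_mul_assoc]
      _ = x ^ (i+1) * (x * y) + x ^ (i+1) + (i+1) • x ^ (i+1) := by
          rw [h, mul_add, mul_one, ← pow_succ]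
      _ = x ^ (i+1+1) * y + (x ^ (i+1) + (i+1) • x ^ (i+1)) := by
          rw [← mul_assoc, ← pow_succ, add_assoc]
      _ = x ^ (i+1+1) * y + (i+1+1) • x ^ (i+1) := by rw [succ_nsmul' (x ^ (i+1)) (i+1)]

lemma st18_comm_id {R : Type*} [Ring R] {x y : R} (h : y * x = x * y + 1) (a : R) :
    (a*y - y*a)*x - x*(a*y - y*a) = (a*x - x*a)*y - y*(a*x - x*a) := by
  have h0 : (a*y - y*a)*x - x*(a*y - y*a) - ((a*x - x*a)*y - y*(a*x - x*a))
      = (a*(y*x) - (y*x)*a) - (a*(x*y) - (x*y)*a) := by noncomm_ring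
  rw [h] at h0
  have h1 : (a*(x*y+1) - (x*y+1)*a) - (a*(x*y) - (x*y)*a) = (0 : R) := by noncomm_ring
  rw [h1] at h0
  exact sub_eq_zero.mp h0

lemma st18_mulLeft_eq_aeval (p : F[X]) :
    LinearMap.mulLeft F p = aeval (Xo : Module.End F F[X]) p := by
  have h : (Xo : Module.End F F[X]) = Algebra.lmul F F[X] X := rfl
  rw [h, Polynomial.aeval_algHom_apply, aeval_X_left_apply]
  rfl

lemma st18_centralizer (v : Module.End F F[X]) (h : v * Xo = Xo * v) :
    v = LinearMap.mulLeft F (v 1) := by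
  have hc : ∀ p : F[X], v * LinearMap.mulLeft F p = LinearMap.mulLeft F p * v := by
    intro p
    rw [st18_mulLeft_eq_aeval]
    induction p using Polynomial.induction_on' with
    | add p q hp hq => rw [map_add, mul_add, add_mul, hp, hq]
    | monomial n a =>
      rw [aeval_monomial]
      have hpow : v * Xo ^ n = Xo ^ n * v := (Commute.pow_right h n)
      calc v * (algebraMap F _ a * Xo ^ n) = algebraMap F _ a * (v * Xo ^ n) := by
            rw [← mul_assoc, ← Algebra.commutes, mul_assoc]
        _ = (algebraMap F _ a * Xo ^ n) * v := by rw [hpow, ← mul_assoc]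
  refine LinearMap.ext fun f => ?_
  have := congrArg (fun (w : Module.End F F[X]) => w 1) (hc f)
  simp only [Module.End.mul_apply, LinearMap.mulLeft_apply, mul_one] at this
  simpa [mul_comm] using this

lemma st18_antideriv (p : F[X]) : ∃ g : F[X], derivative g = p := by
  refine ⟨p.sum fun n c => C (c / (n+1)) * X^(n+1), ?_⟩
  conv_rhs => rw [← p.sum_C_mul_X_pow_eq]
  rw [Polynomial.sum, Polynomial.sum, map_sum]
  refine Finset.sum_congr rfl fun n _ => ?_
  rw [derivative_C_mul_X_pow]
  have hne : ((n : F) + 1) ≠ 0 := Nat.cast_add_one_ne_zero n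
  rw [Nat.cast_add_one, div_mul_cancel₀ _ hne, Nat.add_sub_cancel]

lemma st18_Xmem : (Xo : Module.End F F[X]) ∈
    Algebra.adjoin F ({Xo, Yo} : Set (Module.End F F[X])) :=
  Algebra.subset_adjoin (Set.mem_insert _ _)

lemma st18_Ymem : (Yo : Module.End F F[X]) ∈
    Algebra.adjoin F ({Xo, Yo} : Set (Module.End F F[X])) :=
  Algebra.subset_adjoin (Set.mem_insert_iff.2 (Or.inr rfl))

lemma st18_mulLeft_mem (g : F[X]) : LinearMap.mulLeft F g ∈
    Algebra.adjoin F ({Xo, Yo} : Set (Module.End F F[X])) := by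
  have h1 : aeval (Xo : Module.End F F[X]) g ∈ Algebra.adjoin F ({Xo} : Set _) := by
    rw [Algebra.adjoin_singleton_eq_range_aeval]
    exact ⟨g, rfl⟩
  have h2 := Algebra.adjoin_mono (R := F)
    (by simp : ({Xo} : Set (Module.End F F[X])) ⊆ {Xo, Yo}) h1
  rwa [← st18_mulLeft_eq_aeval] at h2

lemma st18_mulLeft_deriv_comm (g : F[X]) :
    LinearMap.mulLeft F g * Yo - (Yo : Module.End F F[X]) * LinearMap.mulLeft F g
      = LinearMap.mulLeft F (-(derivative g)) := by
  refine LinearMap.ext fun f => ?_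
  simp [Module.End.mul_apply, derivative_mul]

lemma st18_adjoin_le_span :
    Subalgebra.toSubmodule (Algebra.adjoin F ({Xo, Yo} : Set (Module.End F F[X]))) ≤
      Submodule.span F (Set.range fun ij : ℕ × ℕ =>
        (Xo : Module.End F F[X]) ^ ij.1 * Yo ^ ij.2) := by
  set M := Submodule.span F (Set.range fun ij : ℕ × ℕ =>
        (Xo : Module.End F F[X]) ^ ij.1 * Yo ^ ij.2) with hM
  have hmono : ∀ i j : ℕ, (Xo : Module.End F F[X]) ^ i * Yo ^ j ∈ M :=
    fun i j => Submodule.subset_span ⟨(i, j), rfl⟩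
  have hXmul : ∀ v ∈ M, (Xo : Module.End F F[X]) * v ∈ M := by
    intro v hv
    induction hv using Submodule.span_induction with
    | mem v hv =>
      obtain ⟨⟨i, j⟩, rfl⟩ := hv
      have : (Xo : Module.End F F[X]) * (Xo ^ i * Yo ^ j) = Xo ^ (i+1) * Yo ^ j := by
        rw [← mul_assoc, ← pow_succ']
      rw [this]; exact hmono _ _
    | zero => rw [mul_zero]; exact zero_mem _
    | add u w _ _ hu hw => rw [mul_add]; exact add_mem hu hw
    | smul r u _ hu => rw [mul_smul_comm]; exact Submodule.smul_mem _ _ hu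
  have hYmul : ∀ v ∈ M, (Yo : Module.End F F[X]) * v ∈ M := by
    intro v hv
    induction hv using Submodule.span_induction with
    | mem v hv =>
      obtain ⟨⟨i, j⟩, rfl⟩ := hv
      match i with
      | 0 =>
        have : (Yo : Module.End F F[X]) * (Xo ^ 0 * Yo ^ j) = Xo ^ 0 * Yo ^ (j+1) := by
          rw [pow_zero, one_mul, one_mul, ← pow_succ']
        rw [this]; exact hmono _ _
      | (k+1) =>
        have h2 := st18_key2 (st18_comm1 (F := F)) k
        have : (Yo : Module.End F F[X]) * (Xo ^ (k+1) * Yo ^ j)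
            = Xo ^ (k+1) * Yo ^ (j+1) + ((k+1 : ℕ) : F) • (Xo ^ k * Yo ^ j) := by
          rw [← mul_assoc, h2, add_mul, smul_mul_assoc, mul_assoc, ← pow_succ',
            Nat.cast_smul_eq_nsmul]
        rw [this]
        exact add_mem (hmono _ _) (Submodule.smul_mem _ _ (hmono _ _))
    | zero => rw [mul_zero]; exact zero_mem _
    | add u w _ _ hu hw => rw [mul_add]; exact add_mem hu hw
    | smul r u _ hu => rw [mul_smul_comm]; exact Submodule.smul_mem _ _ hu
  rw [Algebra.adjoin_eq_span, Submodule.span_le]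
  intro w hw
  induction hw using Submonoid.closure_induction_left with
  | one => simpa using hmono 0 0
  | mul_left x hx y hy ih =>
    rcases hx with rfl | hx
    · exact hXmul y ih
    · rw [Set.mem_singleton_iff] at hx
      subst hx
      exact hYmul y ih

end Stmt18Aux

section Stmt18Aux2
set_option linter.unusedSectionVars false
variable {F : Type*} [Field F] [CharZero F]
local notation "Xo" => LinearMap.mulLeft F (Polynomial.X : F[X])
local notation "Yo" => (Polynomial.derivative : F[X] →ₗ[F] F[X])

lemma st18_key1F (j : ℕ) :
    (Yo : Module.End F F[X]) ^ (j+1) * Xo = Xo * Yo ^ (j+1) + ((j : F) + 1) • Yo ^ j := by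
  have h := st18_key1 (st18_comm1 (F := F)) j
  have h2 := Nat.cast_smul_eq_nsmul F (j+1) ((Yo : Module.End F F[X]) ^ j)
  push_cast at h2
  rw [h, ← h2]

lemma st18_L1 {R : Type*} [Ring R] (x y a dY : R) :
    (dY - (a*y - y*a)) * x - x * (dY - (a*y - y*a))
      = (dY*x - x*dY) - ((a*y - y*a)*x - x*(a*y - y*a)) := by noncomm_ring

lemma st18_Lsplit {R : Type*} [Ring R] (a b x : R) :
    (a+b)*x - x*(a+b) = (a*x - x*a) + (b*x - x*b) := by noncomm_ring

lemma st18_L4 {R : Type*} [Ring R] (a u w : R) :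
    (a*u - u*a) + (a*w - w*a) = a*(u+w) - (u+w)*a := by noncomm_ring

lemma st18_L5 {R : Type*} [Ring R] (a u w : R) :
    (a*u - u*a)*w + u*(a*w - w*a) = a*(u*w) - (u*w)*a := by noncomm_ring

lemma st18_Laddsub {G : Type*} [AddCommGroup G] (a b : G) : b = a + (b - a) := by abel

lemma st18_Lrearr {G : Type*} [AddCommGroup G] {a b c d : G} (h : a + d = c + b) :
    a - b = c - d := by
  rw [sub_eq_sub_iff_add_eq_add]
  exact h

end Stmt18Aux2


section Stmt18Main
set_option linter.unusedSectionVars false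

/-- Generic form: in any `F`-algebra generated by `x, y` with `yx = xy + 1`, given
surjectivity of `[-,x]` and the centralizer condition, every derivation is inner. -/
theorem st18_generic {F R : Type*} [Field F] [Ring R] [Algebra F R]
    (x y : R) (h1 : y * x = x * y + 1)
    (htop : Algebra.adjoin F ({x, y} : Set R) = ⊤)
    (D : R →ₗ[F] R) (hD : ∀ a b : R, D (a * b) = D a * b + a * D b)
    (hsurj : ∀ c : R, ∃ b : R, b * x - x * b = c)
    (hcent : ∀ t : R, t * x = x * t → ∃ u : R, u * y - y * u = t ∧ u * x = x * u) :
    ∃ a : R, ∀ b : R, D b = a * b - b * a := by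
  have h0 : D 1 = D 1 + D 1 := by simpa using hD 1 1
  have hD1 : D 1 = 0 := left_eq_add.mp h0
  obtain ⟨a₁, ha₁⟩ := hsurj (D x)
  set q := D y - (a₁ * y - y * a₁) with hq
  have h3 : D y * x - x * D y = D x * y - y * D x := by
    have e1 := hD y x
    have e2 := hD x y
    rw [h1, map_add, hD1, add_zero, e2] at e1
    exact sub_eq_sub_iff_add_eq_add.mpr e1.symm
  have hqX : q * x = x * q := by
    have hcid := st18_comm_id h1 a₁
    rw [ha₁] at hcid
    have expand : q * x - x * q
        = (D y * x - x * D y) - ((a₁ * y - y * a₁) * x - x * (a₁ * y - y * a₁)) := by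
      rw [hq]; noncomm_ring
    rw [hcid, h3, sub_self] at expand
    exact sub_eq_zero.mp expand
  obtain ⟨a₂, ha₂Y, ha₂X⟩ := hcent q hqX
  refine ⟨a₁ + a₂, fun b => ?_⟩
  have hb : b ∈ Algebra.adjoin F ({x, y} : Set R) := htop ▸ Algebra.mem_top
  induction hb using Algebra.adjoin_induction with
  | mem z hz =>
    rcases hz with rfl | hz
    · have hexp : (a₁ + a₂) * z - z * (a₁ + a₂) = (a₁ * z - z * a₁) + (a₂ * z - z * a₂) := by
        noncomm_ring
      rw [hexp, ha₁, sub_eq_zero.mpr ha₂X, add_zero]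
    · rw [Set.mem_singleton_iff] at hz
      subst hz
      have hexp : (a₁ + a₂) * z - z * (a₁ + a₂) = (a₁ * z - z * a₁) + (a₂ * z - z * a₂) := by
        noncomm_ring
      rw [hexp, ha₂Y, hq]
      abel
  | algebraMap r =>
    rw [Algebra.algebraMap_eq_smul_one, map_smul, hD1, smul_zero, mul_smul_comm,
      smul_mul_assoc, mul_one, one_mul, sub_self]
  | add u w hu hw ihu ihw =>
    rw [map_add, ihu, ihw]
    noncomm_ring
  | mul u w hu hw ihu ihw =>
    rw [hD, ihu, ihw]
    noncomm_ring

variable {F : Type*} [Field F] [CharZero F]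
local notation "Xo" => LinearMap.mulLeft F (Polynomial.X : F[X])
local notation "Yo" => (Polynomial.derivative : F[X] →ₗ[F] F[X])
local notation "SS" => Algebra.adjoin F ({Xo, Yo} : Set (Module.End F F[X]))

set_option synthInstance.maxHeartbeats 1000000 in
set_option maxHeartbeats 4000000 in
lemma st18_hYX : (⟨Yo, st18_Ymem⟩ : SS) * ⟨Xo, st18_Xmem⟩
    = ⟨Xo, st18_Xmem⟩ * ⟨Yo, st18_Ymem⟩ + 1 := by
  apply Subtype.ext
  show (Yo : Module.End F F[X]) * Xo = (Xo : Module.End F F[X]) * Yo + 1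
  exact st18_comm1

set_option synthInstance.maxHeartbeats 1000000 in
set_option maxHeartbeats 4000000 in
lemma st18_htop : Algebra.adjoin F
    ({⟨Xo, st18_Xmem⟩, ⟨Yo, st18_Ymem⟩} : Set SS) = ⊤ := by
  have hset : (((↑) : SS → Module.End F F[X]) ⁻¹' ({Xo, Yo} : Set (Module.End F F[X])))
      = ({⟨Xo, st18_Xmem⟩, ⟨Yo, st18_Ymem⟩} : Set SS) := by
    ext z
    simp [Set.mem_preimage, Set.mem_insert_iff, Subtype.ext_iff]
  rw [← hset]
  exact Algebra.adjoin_adjoin_coe_preimage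

set_option synthInstance.maxHeartbeats 1000000 in
set_option maxHeartbeats 4000000 in
lemma st18_hsurj (c : SS) : ∃ b : SS,
    b * ⟨Xo, st18_Xmem⟩ - ⟨Xo, st18_Xmem⟩ * b = c := by
  have hc : (c : Module.End F F[X]) ∈ Submodule.span F (Set.range fun ij : ℕ × ℕ =>
      (Xo : Module.End F F[X]) ^ ij.1 * Yo ^ ij.2) :=
    st18_adjoin_le_span c.2
  have main : ∀ v ∈ Submodule.span F (Set.range fun ij : ℕ × ℕ =>
      (Xo : Module.End F F[X]) ^ ij.1 * Yo ^ ij.2),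
      ∃ b : Module.End F F[X], b ∈ Algebra.adjoin F ({Xo, Yo} : Set (Module.End F F[X])) ∧
        b * Xo - (Xo : Module.End F F[X]) * b = v := by
    intro v hv
    induction hv using Submodule.span_induction with
    | mem v hv =>
      obtain ⟨⟨i, j⟩, rfl⟩ := hv
      refine ⟨(((j : F) + 1)⁻¹) • ((Xo : Module.End F F[X]) ^ i * Yo ^ (j+1)),
        Subalgebra.smul_mem _ (mul_mem (pow_mem st18_Xmem i) (pow_mem st18_Ymem (j+1))) _, ?_⟩
      show _ = (Xo : Module.End F F[X]) ^ i * Yo ^ j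
      have hne : ((j : F) + 1) ≠ 0 := Nat.cast_add_one_ne_zero j
      have h1 : (Xo : Module.End F F[X]) ^ i * Yo ^ (j+1) * Xo
          - (Xo : Module.End F F[X]) * ((Xo : Module.End F F[X]) ^ i * Yo ^ (j+1))
          = ((j : F) + 1) • ((Xo : Module.End F F[X]) ^ i * Yo ^ j) := by
        rw [mul_assoc, st18_key1F j, mul_add, mul_smul_comm, ← mul_assoc, ← mul_assoc,
          ← pow_succ, ← pow_succ']
        exact add_sub_cancel_left _ _
      rw [smul_mul_assoc, mul_smul_comm]
      calc (((j : F) + 1)⁻¹) • ((Xo : Module.End F F[X]) ^ i * Yo ^ (j+1) * Xo)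
            - (((j : F) + 1)⁻¹) • ((Xo : Module.End F F[X]) * ((Xo : Module.End F F[X]) ^ i * Yo ^ (j+1)))
          = (((j : F) + 1)⁻¹) • ((Xo : Module.End F F[X]) ^ i * Yo ^ (j+1) * Xo
            - (Xo : Module.End F F[X]) * ((Xo : Module.End F F[X]) ^ i * Yo ^ (j+1))) := by
            rw [smul_sub]
        _ = (((j : F) + 1)⁻¹) • (((j : F) + 1) • ((Xo : Module.End F F[X]) ^ i * Yo ^ j)) := by
            rw [h1]
        _ = (Xo : Module.End F F[X]) ^ i * Yo ^ j := inv_smul_smul₀ hne _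
    | zero => exact ⟨0, zero_mem _, by simp⟩
    | add u w _ _ ihu ihw =>
      obtain ⟨b, hbm, hb⟩ := ihu
      obtain ⟨b', hbm', hb'⟩ := ihw
      refine ⟨b + b', add_mem hbm hbm', ?_⟩
      rw [← hb, ← hb']
      exact st18_Lsplit _ _ _
    | smul r u _ ihu =>
      obtain ⟨b, hbm, hb⟩ := ihu
      refine ⟨r • b, Subalgebra.smul_mem _ hbm _, ?_⟩
      rw [smul_mul_assoc, mul_smul_comm]
      calc r • (b * Xo) - r • ((Xo : Module.End F F[X]) * b)
          = r • (b * Xo - (Xo : Module.End F F[X]) * b) := by rw [smul_sub]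
        _ = r • u := by rw [hb]
  obtain ⟨b, hbm, hbeq⟩ := main _ hc
  refine ⟨⟨b, hbm⟩, Subtype.ext ?_⟩
  show b * Xo - (Xo : Module.End F F[X]) * b = (c : Module.End F F[X])
  exact hbeq

set_option synthInstance.maxHeartbeats 1000000 in
set_option maxHeartbeats 4000000 in
lemma st18_hcent (t : SS)
    (ht : t * ⟨Xo, st18_Xmem⟩ = ⟨Xo, st18_Xmem⟩ * t) :
    ∃ u : SS, u * ⟨Yo, st18_Ymem⟩ - ⟨Yo, st18_Ymem⟩ * u = t ∧
      u * ⟨Xo, st18_Xmem⟩ = ⟨Xo, st18_Xmem⟩ * u := by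
  have ht' : (t : Module.End F F[X]) * Xo = (Xo : Module.End F F[X]) * t :=
    congrArg Subtype.val ht
  have htp : (t : Module.End F F[X]) = LinearMap.mulLeft F ((t : Module.End F F[X]) 1) :=
    st18_centralizer _ ht'
  obtain ⟨g, hg⟩ := st18_antideriv (-((t : Module.End F F[X]) 1))
  refine ⟨⟨LinearMap.mulLeft F g, st18_mulLeft_mem g⟩, Subtype.ext ?_, Subtype.ext ?_⟩
  · show LinearMap.mulLeft F g * Yo - (Yo : Module.End F F[X]) * LinearMap.mulLeft F g
      = (t : Module.End F F[X])
    rw [st18_mulLeft_deriv_comm, hg, neg_neg, ← htp]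
  · show LinearMap.mulLeft F g * Xo = (Xo : Module.End F F[X]) * LinearMap.mulLeft F g
    refine LinearMap.ext fun f => ?_
    simp only [Module.End.mul_apply, LinearMap.mulLeft_apply]
    ring

set_option synthInstance.maxHeartbeats 1000000 in
set_option maxHeartbeats 16000000 in
lemma st18_concrete (D : SS →ₗ[F] SS) (hD : ∀ a b : SS, D (a * b) = D a * b + a * D b) :
    ∃ a : SS, ∀ b : SS, D b = a * b - b * a :=
  st18_generic (R := SS) ⟨Xo, st18_Xmem⟩ ⟨Yo, st18_Ymem⟩
    st18_hYX st18_htop D hD st18_hsurj st18_hcent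

end Stmt18Main

set_option synthInstance.maxHeartbeats 800000 in
set_option maxHeartbeats 1600000 in
/-- characteristic 0.  Let `A ⊆ End_F(F[x])` be the subalgebra generated by
multiplication by `x` and differentiation `d/dx` (the Weyl algebra).  Every `F`-linear
derivation of `A` is inner. -/
theorem stmt18 {F : Type*} [Field F] [CharZero F]
    (A : Subalgebra F (Module.End F F[X]))
    (hA : A = Algebra.adjoin F
      ({LinearMap.mulLeft F (X : F[X]), (derivative : F[X] →ₗ[F] F[X])} :
        Set (Module.End F F[X])))
    (D : A →ₗ[F] A) (hD : ∀ a b : A, D (a * b) = D a * b + a * D b) :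
    ∃ a : A, ∀ b : A, D b = a * b - b * a := by
  subst hA
  exact st18_concrete D hD
end
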